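/- arXiv:1403.1385 — 6 statements merged into one kernel-verified Lean document; each statement's English description precedes it below -/
import Mathlib

section
/- Fix a parameter p with 1/2 ≤ p ≤ 1. For every θ ∈ [0,1] and every n ∈ ℕ, if Φ^k(θ) ≠ 1/2 for all 0 ≤ k < n, then Φ^n(1-θ) = 1 - Φ^n(θ). In particular the maps f_B and f_T satisfy f_B(1-x) = 1 - f_T(x) for all x ∈ [0,1]. -/
noncomputable section

/-- The map `f_B`: `f_B(θ) = (3p-1) - γ/θ` for `θ ≥ 1/2`, and `1-p` for `θ ≤ 1/2`,
where `γ = 2p - 1`. -/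
def fB (p θ : ℝ) : ℝ := if 1/2 ≤ θ then (3*p - 1) - (2*p - 1)/θ else 1 - p

/-- The map `f_T`: `f_T(θ) = p` for `θ ≥ 1/2`, and `(2-3p) + γ/(1-θ)` for `θ ≤ 1/2`. -/
def fT (p θ : ℝ) : ℝ := if 1/2 ≤ θ then p else (2 - 3*p) + (2*p - 1)/(1 - θ)

/-- The belief dynamics `Φ`: `Φ(x) = f_B(x)` if `x ≥ 1/2`, `f_T(x)` otherwise. -/
def Phi (p x : ℝ) : ℝ := if 1/2 ≤ x then fB p x else fT p x

lemma phi_symm (p θ : ℝ) (h : θ ≠ 1/2) : Phi p (1 - θ) = 1 - Phi p θ := by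
  rcases lt_or_gt_of_ne h with h1 | h1
  · have h2 : ¬ (1/2 ≤ θ) := not_le.mpr h1
    have h3 : (1:ℝ)/2 ≤ 1 - θ := by linarith
    have hne : (1:ℝ) - θ ≠ 0 := by linarith
    simp only [Phi, fB, fT, if_pos h3, if_neg h2]
    field_simp
    ring
  · have h2 : (1:ℝ)/2 ≤ θ := le_of_lt h1
    have h3 : ¬ ((1:ℝ)/2 ≤ 1 - θ) := by push_neg; linarith
    have hne : θ ≠ 0 := by linarith
    have h4 : (1:ℝ) - (1 - θ) = θ := by ring
    simp only [Phi, fB, fT, if_pos h2, if_neg h3, h4]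
    field_simp
    ring

lemma phi_iter_symm (p : ℝ) : ∀ n : ℕ, ∀ θ : ℝ,
    (∀ k < n, (Phi p)^[k] θ ≠ 1/2) →
    (Phi p)^[n] (1 - θ) = 1 - (Phi p)^[n] θ := by
  intro n
  induction n with
  | zero => intro θ _; simp
  | succ m ih =>
    intro θ hk
    rw [Function.iterate_succ_apply, Function.iterate_succ_apply,
      phi_symm p θ (hk 0 (Nat.succ_pos m))]
    exact ih (Phi p θ) (fun k hkm => by
      have := hk (k + 1) (Nat.succ_lt_succ hkm)
      rwa [Function.iterate_succ_apply] at this)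

theorem symmetry_of_Phi_iterates (p : ℝ) (hp : 1/2 ≤ p) (hp1 : p ≤ 1) :
    (∀ θ ∈ Set.Icc (0:ℝ) 1, ∀ n : ℕ,
      (∀ k < n, (Phi p)^[k] θ ≠ 1/2) →
      (Phi p)^[n] (1 - θ) = 1 - (Phi p)^[n] θ) ∧
    (∀ x ∈ Set.Icc (0:ℝ) 1, fB p (1 - x) = 1 - fT p x) := by
  constructor
  · intro θ _ n hk
    exact phi_iter_symm p n θ hk
  · intro x _
    rcases le_or_gt (1/2 : ℝ) x with hx | hx
    · have h3 : ((1:ℝ)/2 ≤ 1 - x) ↔ x ≤ 1/2 := by constructor <;> intro <;> linarith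
      simp only [fB, fT, if_pos hx]
      by_cases h : (1:ℝ)/2 ≤ 1 - x
      · have hx2 : x = 1/2 := le_antisymm (h3.mp h) hx
        rw [if_pos h, hx2]
        norm_num
        ring
      · rw [if_neg h]
    · have h2 : ¬ ((1:ℝ)/2 ≤ x) := not_le.mpr hx
      have h3 : (1:ℝ)/2 ≤ 1 - x := by linarith
      have hne : (1:ℝ) - x ≠ 0 := by linarith
      simp only [fB, fT, if_pos h3, if_neg h2]
      ring
end
end

section
/- Fix a parameter p with 1/2 ≤ p ≤ 1, let n ≥ 1 and θ ∈ [0,1]. Set θ_i = Φ^{n-i}(θ) for 0 ≤ i ≤ n (so θ_0 = Φ^n(θ) and θ_n = θ), and let ε_i = 1 if θ_i ≥ 1/2 and ε_i = 0 otherwise. Then A_{ε_n} · A_{ε_{n-1}} · ⋯ · A_{ε_1} · (θ_0 - 1, θ_0)ᵀ = (∏_{i=1}^{n} γ / max(θ_i, 1-θ_i)) · (θ_n - 1, θ_n)ᵀ. -/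
noncomputable section

/-- The matrix `A₀ = [[γ, -γ], [1-p, p]]` with `γ = 2p-1`. -/
def A0 (p : ℝ) : Matrix (Fin 2) (Fin 2) ℝ := !![2*p - 1, -(2*p - 1); 1 - p, p]

/-- The matrix `A₁ = [[p, 1-p], [-γ, γ]]` with `γ = 2p-1`. -/
def A1 (p : ℝ) : Matrix (Fin 2) (Fin 2) ℝ := !![p, 1 - p; -(2*p - 1), 2*p - 1]

/-- `A_{ε(t)}`, where `ε(t) = 1` if `t ≥ 1/2` and `ε(t) = 0` otherwise. -/
def Aeps (p t : ℝ) : Matrix (Fin 2) (Fin 2) ℝ := if 1/2 ≤ t then A1 p else A0 p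

lemma phi_mem (p : ℝ) (hp : 1/2 ≤ p) (hp1 : p ≤ 1) (t : ℝ) (ht : t ∈ Set.Icc (0:ℝ) 1) :
    Phi p t ∈ Set.Icc (0:ℝ) 1 := by
  obtain ⟨ht0, ht1⟩ := ht
  rcases le_or_gt (1/2) t with h | h
  · have htpos : (0:ℝ) < t := by linarith
    have h1 : (2*p - 1)/t ≤ 2*(2*p-1) := by rw [div_le_iff₀ htpos]; nlinarith
    have h2 : (2*p - 1) ≤ (2*p-1)/t := by rw [le_div_iff₀ htpos]; nlinarith
    simp only [Phi, fB, if_pos h]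
    constructor <;> linarith
  · have htpos : (0:ℝ) < 1 - t := by linarith
    have h1 : (2*p - 1)/(1-t) ≤ 2*(2*p-1) := by rw [div_le_iff₀ htpos]; nlinarith
    have h2 : (2*p - 1) ≤ (2*p-1)/(1-t) := by rw [le_div_iff₀ htpos]; nlinarith
    simp only [Phi, fT, if_neg (not_le.mpr h), if_neg (not_le.mpr h)]
    constructor <;> linarith

lemma step_mulVec (p : ℝ) (hp : 1/2 ≤ p) (hp1 : p ≤ 1) (t : ℝ) (ht : t ∈ Set.Icc (0:ℝ) 1) :
    (Aeps p t).mulVec ![Phi p t - 1, Phi p t]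
      = ((2*p - 1) / max t (1 - t)) • ![t - 1, t] := by
  obtain ⟨ht0, ht1⟩ := ht
  rcases le_or_gt (1/2) t with h | h
  · have htpos : (0:ℝ) < t := by linarith
    have hmax : max t (1-t) = t := max_eq_left (by linarith)
    simp only [Aeps, Phi, fB, if_pos h, A1, hmax]
    funext i; fin_cases i <;>
      simp [Matrix.mulVec, dotProduct, Fin.sum_univ_two] <;>
      field_simp <;> ring
  · have htpos : (0:ℝ) < 1 - t := by linarith
    have hmax : max t (1-t) = 1 - t := max_eq_right (by linarith)
    simp only [Aeps, Phi, fT, if_neg (not_le.mpr h), A0, hmax]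
    funext i; fin_cases i <;>
      simp [Matrix.mulVec, dotProduct, Fin.sum_univ_two] <;>
      field_simp <;> ring

lemma phi_iter_mem (p : ℝ) (hp : 1/2 ≤ p) (hp1 : p ≤ 1) (θ : ℝ)
    (hθ : θ ∈ Set.Icc (0:ℝ) 1) (n : ℕ) : (Phi p)^[n] θ ∈ Set.Icc (0:ℝ) 1 := by
  induction n with
  | zero => simpa using hθ
  | succ m ih => rw [Function.iterate_succ_apply']; exact phi_mem p hp hp1 _ ih

/-- With `θ_i = Φ^{n-i}(θ)` (so `θ_0 = Φ^n(θ)`, `θ_n = θ`) and `ε_i = ε(θ_i)`,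
the product `A_{ε_n} ⋯ A_{ε_1}` applied to `(θ_0 - 1, θ_0)ᵀ` equals
`∏_{i=1}^{n} γ/max(θ_i, 1-θ_i)` times `(θ_n - 1, θ_n)ᵀ`.
(The list `[Aeps θ, Aeps (Φ θ), …, Aeps (Φ^{n-1} θ)] = [A_{ε_n}, …, A_{ε_1}]`, multiplied
left to right, and the product over `j ∈ range n` runs over `θ_i = Φ^j(θ)`, `i = n - j`.) -/
theorem matrix_cocycle_product (p : ℝ) (hp : 1/2 ≤ p) (hp1 : p ≤ 1) (n : ℕ) (hn : 1 ≤ n)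
    (θ : ℝ) (hθ : θ ∈ Set.Icc (0:ℝ) 1) :
    (((List.range n).map (fun j => Aeps p ((Phi p)^[j] θ))).prod).mulVec
        ![(Phi p)^[n] θ - 1, (Phi p)^[n] θ]
      = (∏ j ∈ Finset.range n,
          (2*p - 1) / max ((Phi p)^[j] θ) (1 - (Phi p)^[j] θ)) • ![θ - 1, θ] := by
  clear hn
  induction n with
  | zero => simp
  | succ n ih =>
    rw [List.range_succ, List.map_append, List.prod_append, Finset.prod_range_succ]
    simp only [List.map_cons, List.map_nil, List.prod_cons, List.prod_nil, mul_one,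
      Function.iterate_succ_apply']
    rw [← Matrix.mulVec_mulVec, step_mulVec p hp hp1 _ (phi_iter_mem p hp hp1 θ hθ n),
      Matrix.mulVec_smul, ih, smul_smul, mul_comm]
end
end

section
/- Fix a parameter p with 1/2 ≤ p ≤ 1. Set p_n = Φ^n(p), u_n = max(p_n, 1-p_n), and ε_n = 1 if p_n ≥ 1/2 and ε_n = 0 otherwise. Then for every n ≥ 0, ∏_{k=0}^{n} u_k = (0, 1) · U_{ε_n} U_{ε_{n-1}} ⋯ U_{ε_0} · (p, 1)ᵀ. -/
noncomputable section

/-- The matrix `U₀ = [[3p-2, 1-p], [-1, 1]]`. -/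
def U0 (p : ℝ) : Matrix (Fin 2) (Fin 2) ℝ := !![3*p - 2, 1 - p; -1, 1]

/-- The matrix `U₁ = [[3p-1, -(2p-1)], [1, 0]]`. -/
def U1 (p : ℝ) : Matrix (Fin 2) (Fin 2) ℝ := !![3*p - 1, -(2*p - 1); 1, 0]

/-- `U_{ε(t)}`, where `ε(t) = 1` if `t ≥ 1/2` and `ε(t) = 0` otherwise. -/
def Ueps (p t : ℝ) : Matrix (Fin 2) (Fin 2) ℝ := if 1/2 ≤ t then U1 p else U0 p

lemma key (p : ℝ) (hp : 1/2 ≤ p) (n : ℕ) :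
    (((List.range (n+1)).reverse.map (fun k => Ueps p ((Phi p)^[k] p))).prod).mulVec ![p, 1]
    = ![(∏ k ∈ Finset.range (n+1), max ((Phi p)^[k] p) (1 - (Phi p)^[k] p)) * (Phi p)^[n+1] p,
        ∏ k ∈ Finset.range (n+1), max ((Phi p)^[k] p) (1 - (Phi p)^[k] p)] := by
  induction n with
  | zero =>
      have hp0 : p ≠ 0 := by linarith
      have hmax : max p (1-p) = p := max_eq_left (by linarith)
      have h1 : List.range 1 = [0] := rfl
      simp only [h1, List.reverse_singleton, List.map_cons, List.map_nil,
        List.prod_cons, List.prod_nil, mul_one, zero_add, Finset.prod_range_one,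
        Function.iterate_one, Function.iterate_zero_apply]
      rw [Ueps, if_pos hp, hmax, Phi, if_pos hp, fB, if_pos hp, U1]
      funext i
      fin_cases i <;>
        simp [Matrix.mulVec, dotProduct, Fin.sum_univ_two] <;>
        field_simp <;> ring
  | succ n ih =>
      have hrange : (List.range (n+2)).reverse = (n+1) :: (List.range (n+1)).reverse := by
        rw [List.range_succ, List.reverse_append]; simp
      rw [hrange, List.map_cons, List.prod_cons, ← Matrix.mulVec_mulVec, ih]
      set θ := (Phi p)^[n+1] p with hθ
      set P := ∏ k ∈ Finset.range (n+1), max ((Phi p)^[k] p) (1 - (Phi p)^[k] p) with hP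
      rw [Finset.prod_range_succ, ← hP, ← hθ]
      have hiter : (Phi p)^[n+2] p = Phi p θ := by
        rw [Function.iterate_succ_apply']
      rw [hiter]
      by_cases h : 1/2 ≤ θ
      · have hθ0 : θ ≠ 0 := by intro h0; rw [h0] at h; norm_num at h
        have hmax : max θ (1-θ) = θ := max_eq_left (by linarith)
        rw [Ueps, if_pos h, Phi, if_pos h, fB, if_pos h, hmax, U1]
        funext i
        fin_cases i
        · simp [Matrix.mulVec, dotProduct, Fin.sum_univ_two]
          field_simp [hθ0]
          ring
        · simp [Matrix.mulVec, dotProduct, Fin.sum_univ_two]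
      · have hθ1 : (1:ℝ) - θ ≠ 0 := by
          push_neg at h; intro h0; nlinarith
        have hmax : max θ (1-θ) = 1-θ := max_eq_right (by push_neg at h; linarith)
        rw [Ueps, if_neg h, Phi, if_neg h, fT, if_neg h, hmax, U0]
        funext i
        fin_cases i
        · simp [Matrix.mulVec, dotProduct, Fin.sum_univ_two]
          field_simp [hθ1]
          ring
        · simp [Matrix.mulVec, dotProduct, Fin.sum_univ_two]
          ring

/-- With `p_k = Φ^k(p)`, `u_k = max(p_k, 1-p_k)` and `ε_k = ε(p_k)`, for every `n`:
`∏_{k=0}^{n} u_k = (0, 1) · U_{ε_n} U_{ε_{n-1}} ⋯ U_{ε_0} · (p, 1)ᵀ` (the second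
coordinate of the matrix product, multiplied from index `n` down to `0`, applied
to the vector `(p,1)ᵀ`). -/
theorem product_formula (p : ℝ) (hp : 1/2 ≤ p) (hp1 : p ≤ 1) (n : ℕ) :
    ∏ k ∈ Finset.range (n+1), max ((Phi p)^[k] p) (1 - (Phi p)^[k] p)
      = ((((List.range (n+1)).reverse.map (fun k => Ueps p ((Phi p)^[k] p))).prod).mulVec
          ![p, 1]) 1 := by
  rw [key p hp n]
  rfl
end
end

section
/- Fix a parameter p with 1/2 ≤ p < 1 and let θ ∈ [0,1]. Then the series w(θ) = Σ_{n=0}^∞ ∏_{k=0}^{n-1} Θ_k(θ) converges, and for every m ≥ 0 the renewal identity w(θ) = Σ_{n=0}^{m} ∏_{k=0}^{n-1} Θ_k(θ) + (∏_{k=0}^{m} Θ_k(θ)) · w(Φ^{m+1}(θ)) holds. -/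
noncomputable section

/-- `Θ_k(θ) = max(Φ^k(θ), 1 - Φ^k(θ))`. -/
def Theta (p : ℝ) (k : ℕ) (θ : ℝ) : ℝ := max ((Phi p)^[k] θ) (1 - (Phi p)^[k] θ)

/-- `w(θ) = Σ_{n=0}^∞ ∏_{k=0}^{n-1} Θ_k(θ)` (empty product = 1). -/
def w (p θ : ℝ) : ℝ := ∑' n : ℕ, ∏ k ∈ Finset.range n, Theta p k θ

lemma phi_mem_s10 (p : ℝ) (hp : 1/2 ≤ p) {x : ℝ}
    (hx : x ∈ Set.Icc (0:ℝ) 1) : Phi p x ∈ Set.Icc (1-p) p := by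
  obtain ⟨hx0, hx1⟩ := hx
  unfold Phi fB fT
  split_ifs with h
  · have hxpos : (0:ℝ) < x := by linarith
    constructor
    · have : (2*p-1)/x ≤ 4*p - 2 := by
        rw [div_le_iff₀ hxpos]; nlinarith
      linarith
    · have : 2*p - 1 ≤ (2*p-1)/x := by
        rw [le_div_iff₀ hxpos]; nlinarith
      linarith
  · have hxpos : (0:ℝ) < 1 - x := by linarith
    constructor
    · have : 2*p - 1 ≤ (2*p-1)/(1-x) := by
        rw [le_div_iff₀ hxpos]; nlinarith
      linarith
    · have : (2*p-1)/(1-x) ≤ 4*p - 2 := by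
        rw [div_le_iff₀ hxpos]; nlinarith
      linarith

lemma iter_mem (p : ℝ) (hp : 1/2 ≤ p) (hp1 : p ≤ 1) {θ : ℝ}
    (hθ : θ ∈ Set.Icc (0:ℝ) 1) (k : ℕ) :
    (Phi p)^[k+1] θ ∈ Set.Icc (1-p) p := by
  induction k with
  | zero => exact phi_mem_s10 p hp hθ
  | succ n ih =>
    rw [Function.iterate_succ_apply']
    exact phi_mem_s10 p hp ⟨by linarith [ih.1], by linarith [ih.2]⟩

/-- For `1/2 ≤ p < 1` and `θ ∈ [0,1]`, the series defining `w(θ)` converges and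
satisfies the renewal identity
`w(θ) = Σ_{n=0}^{m} ∏_{k<n} Θ_k(θ) + (∏_{k=0}^{m} Θ_k(θ)) · w(Φ^{m+1}(θ))`. -/
theorem w_renewal (p : ℝ) (hp : 1/2 ≤ p) (hp1 : p < 1)
    (θ : ℝ) (hθ : θ ∈ Set.Icc (0:ℝ) 1) :
    Summable (fun n : ℕ => ∏ k ∈ Finset.range n, Theta p k θ) ∧
    ∀ m : ℕ, w p θ = (∑ n ∈ Finset.range (m+1), ∏ k ∈ Finset.range n, Theta p k θ)
      + (∏ k ∈ Finset.range (m+1), Theta p k θ) * w p ((Phi p)^[m+1] θ) := by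
  have hppos : (0:ℝ) < p := by linarith
  have hΘnn : ∀ k, 0 ≤ Theta p k θ := by
    intro k
    rcases le_total ((Phi p)^[k] θ) (1/2) with h | h
    · exact le_max_of_le_right (by linarith)
    · exact le_max_of_le_left (by linarith)
  have hΘ0 : Theta p 0 θ ≤ 1 := by
    simp only [Theta, Function.iterate_zero_apply]
    exact max_le hθ.2 (by linarith [hθ.1])
  have hΘ : ∀ k, Theta p (k+1) θ ≤ p := by
    intro k
    have h := iter_mem p hp hp1.le hθ k
    exact max_le h.2 (by linarith [h.1])
  have hle : ∀ n, ∏ k ∈ Finset.range (n+1), Theta p k θ ≤ p^n := by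
    intro n
    induction n with
    | zero => simpa using hΘ0
    | succ n ih =>
      rw [Finset.prod_range_succ, pow_succ]
      exact mul_le_mul ih (hΘ (n:ℕ)) (hΘnn _) (by positivity)
  have hsum : Summable (fun n : ℕ => ∏ k ∈ Finset.range n, Theta p k θ) := by
    rw [← summable_nat_add_iff 1]
    apply Summable.of_nonneg_of_le
      (fun n => Finset.prod_nonneg fun k _ => hΘnn k) (fun n => hle n)
    exact summable_geometric_of_lt_one hppos.le hp1
  refine ⟨hsum, fun m => ?_⟩
  have key := Summable.sum_add_tsum_nat_add (f := fun n : ℕ => ∏ k ∈ Finset.range n, Theta p k θ) (m+1) hsum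
  have hshift : ∀ i : ℕ, ∏ k ∈ Finset.range (i + (m+1)), Theta p k θ
      = (∏ k ∈ Finset.range (m+1), Theta p k θ)
        * ∏ k ∈ Finset.range i, Theta p k ((Phi p)^[m+1] θ) := by
    intro i
    rw [add_comm i (m+1), Finset.prod_range_add]
    congr 1
    apply Finset.prod_congr rfl
    intro k _
    simp only [Theta]
    rw [add_comm (m+1) k, Function.iterate_add_apply]
  calc w p θ = ∑' n : ℕ, ∏ k ∈ Finset.range n, Theta p k θ := rfl
    _ = (∑ n ∈ Finset.range (m+1), ∏ k ∈ Finset.range n, Theta p k θ)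
        + ∑' i : ℕ, ∏ k ∈ Finset.range (i + (m+1)), Theta p k θ := key.symm
    _ = _ := by
        congr 1
        simp only [hshift]
        rw [tsum_mul_left]
        rfl
end
end

section
/- Fix a parameter p with 1/2 < p ≤ 1. For every t ∈ [1/2, 1] one has max(Φ(t), 1 - Φ(t)) = 2 - 3p + (2p-1)/t if t < 2/3, and max(Φ(t), 1 - Φ(t)) = 3p - 1 - (2p-1)/t if t ≥ 2/3. Moreover the function t ↦ max(Φ(t), 1-Φ(t)) is strictly decreasing on [1/2, 2/3], strictly increasing on [2/3, 1], and takes the value 1/2 at t = 2/3. -/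
noncomputable section

/-- For `1/2 < p ≤ 1`, on `[1/2, 1]` the map `t ↦ max(Φ(t), 1-Φ(t))` is given by the
two explicit branches, is strictly decreasing on `[1/2, 2/3]`, strictly increasing on
`[2/3, 1]`, and equals `1/2` at `t = 2/3`. -/
theorem alpha_branches_and_monotonicity (p : ℝ) (hp : 1/2 < p) (hp1 : p ≤ 1) :
    (∀ t ∈ Set.Icc (1/2 : ℝ) 1,
      (t < 2/3 → max (Phi p t) (1 - Phi p t) = 2 - 3*p + (2*p - 1)/t) ∧
      (2/3 ≤ t → max (Phi p t) (1 - Phi p t) = 3*p - 1 - (2*p - 1)/t)) ∧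
    StrictAntiOn (fun t => max (Phi p t) (1 - Phi p t)) (Set.Icc (1/2 : ℝ) (2/3)) ∧
    StrictMonoOn (fun t => max (Phi p t) (1 - Phi p t)) (Set.Icc (2/3 : ℝ) 1) ∧
    max (Phi p (2/3)) (1 - Phi p (2/3)) = 1/2 := by
  have hγ : 0 < 2*p - 1 := by linarith
  have hPhi : ∀ t : ℝ, 1/2 ≤ t → Phi p t = (3*p - 1) - (2*p - 1)/t := by
    intro t ht; simp only [Phi, fB, if_pos ht]
  have key : ∀ t ∈ Set.Icc (1/2:ℝ) 1,
      (t ≤ 2/3 → max (Phi p t) (1 - Phi p t) = 2 - 3*p + (2*p - 1)/t) ∧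
      (2/3 ≤ t → max (Phi p t) (1 - Phi p t) = 3*p - 1 - (2*p - 1)/t) := by
    rintro t ⟨ht1, ht2⟩
    have ht0 : (0:ℝ) < t := by linarith
    rw [hPhi t ht1]
    constructor
    · intro h
      have h2 : 3*(2*p-1)/2 ≤ (2*p-1)/t := by
        rw [div_le_div_iff₀ (by norm_num) ht0]
        nlinarith
      rw [max_eq_right (by linarith)]
      ring
    · intro h
      have h2 : (2*p-1)/t ≤ 3*(2*p-1)/2 := by
        rw [div_le_div_iff₀ ht0 (by norm_num)]
        nlinarith
      rw [max_eq_left (by linarith)]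
  refine ⟨fun t ht => ⟨fun h => (key t ht).1 h.le, (key t ht).2⟩, ?_, ?_, ?_⟩
  · intro a ha b hb hab
    have ea := (key a ⟨ha.1, by linarith [ha.2]⟩).1 ha.2
    have eb := (key b ⟨hb.1, by linarith [hb.2]⟩).1 hb.2
    dsimp only
    rw [ea, eb]
    have h2 : (2*p-1)/b < (2*p-1)/a :=
      div_lt_div_of_pos_left hγ (by linarith [ha.1]) hab
    linarith
  · intro a ha b hb hab
    have ea := (key a ⟨by linarith [ha.1], ha.2⟩).2 ha.1
    have eb := (key b ⟨by linarith [hb.1], hb.2⟩).2 hb.1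
    dsimp only
    rw [ea, eb]
    have h2 : (2*p-1)/b < (2*p-1)/a :=
      div_lt_div_of_pos_left hγ (by linarith [ha.1]) hab
    linarith
  · have h := (key (2/3) ⟨by norm_num, by norm_num⟩).2 le_rfl
    rw [h]; ring
end
end

section
/- Let p = 3/4, θ̃ = 1085/2244 and ε = 1/100. Set θ̃_ε = (p(1-ε)θ̃ + (1-p)(1-(2-ε)θ̃))/(1-θ̃) and p_ε = p(1-ε) + (1-p)ε. Then (1-θ̃)·(w(Φ(θ̃)) - w(θ̃_ε)) - θ̃·(w(1-p_ε) - (1-ε)·w(1-p)) > 10⁻⁵. (This inequality shows that the strategy σ* is not optimal for Player 1 at p = 3/4.) -/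
noncomputable section

lemma phi_mem_s17 {x : ℝ} (h0 : 0 ≤ x) (h1 : x ≤ 1) :
    1/4 ≤ Phi (3/4) x ∧ Phi (3/4) x ≤ 3/4 := by
  rw [Phi, fB, fT]
  split_ifs with h
  · have hx0 : (0:ℝ) < x := lt_of_lt_of_le (by norm_num) h
    have hA : (2*(3/4:ℝ)-1)/x ≤ 1 := by rw [div_le_one hx0]; linarith
    have hB : (1:ℝ)/2 ≤ (2*(3/4:ℝ)-1)/x := by rw [le_div_iff₀ hx0]; linarith
    constructor <;> [linarith; linarith]
  · push_neg at h
    have hx0 : (0:ℝ) < 1 - x := by linarith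
    have hA : (2*(3/4:ℝ)-1)/(1-x) ≤ 1 := by rw [div_le_one hx0]; linarith
    have hB : (1:ℝ)/2 ≤ (2*(3/4:ℝ)-1)/(1-x) := by rw [le_div_iff₀ hx0]; linarith
    constructor <;> [linarith; linarith]

lemma iter_mem_s17 {θ : ℝ} (h0 : 0 ≤ θ) (h1 : θ ≤ 1) (k : ℕ) :
    0 ≤ (Phi (3/4))^[k] θ ∧ (Phi (3/4))^[k] θ ≤ 1 := by
  induction k with
  | zero => exact ⟨h0, h1⟩
  | succ n ih =>
    rw [Function.iterate_succ_apply']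
    have := phi_mem_s17 ih.1 ih.2
    exact ⟨by linarith [this.1], by linarith [this.2]⟩

lemma theta_half (p θ : ℝ) (k : ℕ) : 1/2 ≤ Theta p k θ := by
  rw [Theta]
  rcases le_total ((Phi p)^[k] θ) (1/2) with h | h
  · exact le_trans (by linarith) (le_max_right _ _)
  · exact le_trans h (le_max_left _ _)

lemma theta_nonneg (p θ : ℝ) (k : ℕ) : 0 ≤ Theta p k θ :=
  le_trans (by norm_num) (theta_half p θ k)

lemma theta_le {θ : ℝ} (h0 : 0 ≤ θ) (h1 : θ ≤ 1) (k : ℕ) :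
    Theta (3/4) (k+1) θ ≤ 3/4 := by
  rw [Theta, Function.iterate_succ_apply']
  have h := iter_mem_s17 h0 h1 k
  have h2 := phi_mem_s17 h.1 h.2
  exact max_le h2.2 (by linarith [h2.1])

lemma theta_zero_le {θ : ℝ} (h0 : 0 ≤ θ) (h1 : θ ≤ 1) : Theta (3/4) 0 θ ≤ 1 := by
  rw [Theta, Function.iterate_zero_apply]
  exact max_le h1 (by linarith)

lemma summable_a {θ : ℝ} (h0 : 0 ≤ θ) (h1 : θ ≤ 1) :
    Summable (fun n => ∏ k ∈ Finset.range n, Theta (3/4) k θ) := by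
  rw [← summable_nat_add_iff 1]
  apply Summable.of_nonneg_of_le
    (fun n => Finset.prod_nonneg fun k _ => theta_nonneg _ _ _)
    (fun n => ?_)
    (summable_geometric_of_lt_one (by norm_num) (by norm_num : (3/4:ℝ) < 1))
  calc ∏ k ∈ Finset.range (n+1), Theta (3/4) k θ
      = (∏ k ∈ Finset.range n, Theta (3/4) (k+1) θ) * Theta (3/4) 0 θ :=
        Finset.prod_range_succ' _ _
    _ ≤ (3/4)^n * 1 := by
        apply mul_le_mul _ (theta_zero_le h0 h1) (theta_nonneg _ _ _) (by positivity)
        calc ∏ k ∈ Finset.range n, Theta (3/4) (k+1) θ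
            ≤ ∏ _k ∈ Finset.range n, (3/4:ℝ) :=
              Finset.prod_le_prod (fun k _ => theta_nonneg _ _ _) (fun k _ => theta_le h0 h1 k)
          _ = (3/4)^n := by rw [Finset.prod_const, Finset.card_range]
    _ = (3/4)^n := by ring

lemma w_bounds {θ : ℝ} (h0 : 0 ≤ θ) (h1 : θ ≤ 1) {N : ℕ} (hN : 1 ≤ N) :
    (∑ n ∈ Finset.range N, ∏ k ∈ Finset.range n, Theta (3/4) k θ)
      + 2 * (∏ k ∈ Finset.range N, Theta (3/4) k θ) ≤ w (3/4) θ ∧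
    w (3/4) θ ≤ (∑ n ∈ Finset.range N, ∏ k ∈ Finset.range n, Theta (3/4) k θ)
      + 4 * (∏ k ∈ Finset.range N, Theta (3/4) k θ) := by
  set a : ℕ → ℝ := fun n => ∏ k ∈ Finset.range n, Theta (3/4) k θ with ha
  have hsum : Summable a := summable_a h0 h1
  have haN : 0 ≤ a N := Finset.prod_nonneg fun k _ => theta_nonneg _ _ _
  have hterm : ∀ i, a N * (1/2)^i ≤ a (i + N) ∧ a (i + N) ≤ a N * (3/4)^i := by
    intro i
    have hsplit : a (i + N) = a N * ∏ k ∈ Finset.range i, Theta (3/4) (N + k) θ := by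
      rw [ha]; simp only [add_comm i N, Finset.prod_range_add]
    constructor
    · rw [hsplit]
      apply mul_le_mul_of_nonneg_left _ haN
      calc ((1:ℝ)/2)^i = ∏ _k ∈ Finset.range i, (1/2:ℝ) := by
            rw [Finset.prod_const, Finset.card_range]
        _ ≤ ∏ k ∈ Finset.range i, Theta (3/4) (N + k) θ :=
            Finset.prod_le_prod (fun k _ => by norm_num) (fun k _ => theta_half _ _ _)
    · rw [hsplit]
      apply mul_le_mul_of_nonneg_left _ haN
      calc ∏ k ∈ Finset.range i, Theta (3/4) (N + k) θ
          ≤ ∏ _k ∈ Finset.range i, (3/4:ℝ) := by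
            apply Finset.prod_le_prod (fun k _ => theta_nonneg _ _ _)
            intro k _
            obtain ⟨m, hm⟩ : ∃ m, N + k = m + 1 := ⟨N + k - 1, by omega⟩
            rw [hm]; exact theta_le h0 h1 m
        _ = (3/4)^i := by rw [Finset.prod_const, Finset.card_range]
  have htail_summable : Summable (fun i => a (i + N)) := (summable_nat_add_iff N).mpr hsum
  have hgeo34 : Summable (fun i : ℕ => a N * (3/4:ℝ)^i) :=
    (summable_geometric_of_lt_one (by norm_num) (by norm_num)).mul_left _
  have hgeo12 : Summable (fun i : ℕ => a N * (1/2:ℝ)^i) :=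
    (summable_geometric_of_lt_one (by norm_num) (by norm_num)).mul_left _
  have hup : ∑' i, a (i + N) ≤ a N * 4 := by
    calc ∑' i, a (i + N) ≤ ∑' i : ℕ, a N * (3/4:ℝ)^i :=
          Summable.tsum_le_tsum (fun i => (hterm i).2) htail_summable hgeo34
      _ = a N * 4 := by
          rw [tsum_mul_left, tsum_geometric_of_lt_one (by norm_num) (by norm_num)]
          norm_num
  have hlo : a N * 2 ≤ ∑' i, a (i + N) := by
    calc (a N) * 2 = a N * (1 - 1/2:ℝ)⁻¹ := by norm_num
      _ = ∑' i : ℕ, a N * (1/2:ℝ)^i := by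
          rw [tsum_mul_left, tsum_geometric_of_lt_one (by norm_num) (by norm_num)]
      _ ≤ ∑' i, a (i + N) := Summable.tsum_le_tsum (fun i => (hterm i).1) hgeo12 htail_summable
  have hsplit : (∑ i ∈ Finset.range N, a i) + ∑' i, a (i + N) = w (3/4) θ :=
    Summable.sum_add_tsum_nat_add N hsum
  constructor
  · rw [← hsplit]; linarith
  · rw [← hsplit]; linarith


lemma it_A_1 : (Phi (3/4))^[1] (3329/4636 : ℝ) = (7373/13316 : ℝ) := by
  rw [Function.iterate_one]; norm_num [Phi, fB, fT]

lemma it_A_2 : (Phi (3/4))^[2] (3329/4636 : ℝ) = (10233/29492 : ℝ) := by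
  rw [Function.iterate_succ_apply', it_A_1]; norm_num [Phi, fB, fT]

lemma it_A_3 : (Phi (3/4))^[3] (3329/4636 : ℝ) = (39725/77036 : ℝ) := by
  rw [Function.iterate_succ_apply', it_A_2]; norm_num [Phi, fB, fT]

lemma it_A_4 : (Phi (3/4))^[4] (3329/4636 : ℝ) = (44553/158900 : ℝ) := by
  rw [Function.iterate_succ_apply', it_A_3]; norm_num [Phi, fB, fT]

lemma it_A_5 : (Phi (3/4))^[5] (3329/4636 : ℝ) = (203453/457388 : ℝ) := by
  rw [Function.iterate_succ_apply', it_A_4]; norm_num [Phi, fB, fT]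

lemma it_A_6 : (Phi (3/4))^[6] (3329/4636 : ℝ) = (660841/1015740 : ℝ) := by
  rw [Function.iterate_succ_apply', it_A_5]; norm_num [Phi, fB, fT]

lemma it_A_7 : (Phi (3/4))^[7] (3329/4636 : ℝ) = (1272725/2643364 : ℝ) := by
  rw [Function.iterate_succ_apply', it_A_6]; norm_num [Phi, fB, fT]

lemma it_A_8 : (Phi (3/4))^[8] (3329/4636 : ℝ) = (3916089/5482556 : ℝ) := by
  rw [Function.iterate_succ_apply', it_A_7]; norm_num [Phi, fB, fT]

lemma it_A_9 : (Phi (3/4))^[9] (3329/4636 : ℝ) = (8615333/15664356 : ℝ) := by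
  rw [Function.iterate_succ_apply', it_A_8]; norm_num [Phi, fB, fT]

lemma it_A_10 : (Phi (3/4))^[10] (3329/4636 : ℝ) = (11747953/34461332 : ℝ) := by
  rw [Function.iterate_succ_apply', it_A_9]; norm_num [Phi, fB, fT]

lemma it_A_11 : (Phi (3/4))^[11] (3329/4636 : ℝ) = (46209285/90853516 : ℝ) := by
  rw [Function.iterate_succ_apply', it_A_10]; norm_num [Phi, fB, fT]

lemma it_A_12 : (Phi (3/4))^[12] (3329/4636 : ℝ) = (49339393/184837140 : ℝ) := by
  rw [Function.iterate_succ_apply', it_A_11]; norm_num [Phi, fB, fT]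

lemma it_A_13 : (Phi (3/4))^[13] (3329/4636 : ℝ) = (234176533/541990988 : ℝ) := by
  rw [Function.iterate_succ_apply', it_A_12]; norm_num [Phi, fB, fT]

lemma it_A_14 : (Phi (3/4))^[14] (3329/4636 : ℝ) = (776167521/1231257820 : ℝ) := by
  rw [Function.iterate_succ_apply', it_A_13]; norm_num [Phi, fB, fT]

lemma it_A_15 : (Phi (3/4))^[15] (3329/4636 : ℝ) = (1418321965/3104670084 : ℝ) := by
  rw [Function.iterate_succ_apply', it_A_14]; norm_num [Phi, fB, fT]

lemma it_A_16 : (Phi (3/4))^[16] (3329/4636 : ℝ) = (4522992049/6745392476 : ℝ) := by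
  rw [Function.iterate_succ_apply', it_A_15]; norm_num [Phi, fB, fT]

lemma it_A_17 : (Phi (3/4))^[17] (3329/4636 : ℝ) = (9124175293/18091968196 : ℝ) := by
  rw [Function.iterate_succ_apply', it_A_16]; norm_num [Phi, fB, fT]

lemma it_A_18 : (Phi (3/4))^[18] (3329/4636 : ℝ) = (9436940073/36496701172 : ℝ) := by
  rw [Function.iterate_succ_apply', it_A_17]; norm_num [Phi, fB, fT]

lemma it_A_19 : (Phi (3/4))^[19] (3329/4636 : ℝ) = (45933641245/108239044396 : ℝ) := by
  rw [Function.iterate_succ_apply', it_A_18]; norm_num [Phi, fB, fT]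

lemma it_A_20 : (Phi (3/4))^[20] (3329/4636 : ℝ) = (154172685641/249221612604 : ℝ) := by
  rw [Function.iterate_succ_apply', it_A_19]; norm_num [Phi, fB, fT]

lemma it_A_21 : (Phi (3/4))^[21] (3329/4636 : ℝ) = (272420202997/616690742564 : ℝ) := by
  rw [Function.iterate_succ_apply', it_A_20]; norm_num [Phi, fB, fT]

lemma it_A_22 : (Phi (3/4))^[22] (3329/4636 : ℝ) = (889110945561/1377082158268 : ℝ) := by
  rw [Function.iterate_succ_apply', it_A_21]; norm_num [Phi, fB, fT]

lemma it_A_23 : (Phi (3/4))^[23] (3329/4636 : ℝ) = (1691390411269/3556443782244 : ℝ) := by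
  rw [Function.iterate_succ_apply', it_A_22]; norm_num [Phi, fB, fT]

lemma it_A_24 : (Phi (3/4))^[24] (3329/4636 : ℝ) = (5247834193513/7460213483900 : ℝ) := by
  rw [Function.iterate_succ_apply', it_A_23]; norm_num [Phi, fB, fT]

lemma th_A_0 : Theta (3/4) 0 (3329/4636 : ℝ) = (3329/4636 : ℝ) := by
  rw [Theta, Function.iterate_zero_apply]; norm_num [max_def]

lemma th_A_1 : Theta (3/4) 1 (3329/4636 : ℝ) = (7373/13316 : ℝ) := by
  rw [Theta, it_A_1]; norm_num [max_def]

lemma th_A_2 : Theta (3/4) 2 (3329/4636 : ℝ) = (19259/29492 : ℝ) := by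
  rw [Theta, it_A_2]; norm_num [max_def]

lemma th_A_3 : Theta (3/4) 3 (3329/4636 : ℝ) = (39725/77036 : ℝ) := by
  rw [Theta, it_A_3]; norm_num [max_def]

lemma th_A_4 : Theta (3/4) 4 (3329/4636 : ℝ) = (114347/158900 : ℝ) := by
  rw [Theta, it_A_4]; norm_num [max_def]

lemma th_A_5 : Theta (3/4) 5 (3329/4636 : ℝ) = (253935/457388 : ℝ) := by
  rw [Theta, it_A_5]; norm_num [max_def]

lemma th_A_6 : Theta (3/4) 6 (3329/4636 : ℝ) = (660841/1015740 : ℝ) := by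
  rw [Theta, it_A_6]; norm_num [max_def]

lemma th_A_7 : Theta (3/4) 7 (3329/4636 : ℝ) = (1370639/2643364 : ℝ) := by
  rw [Theta, it_A_7]; norm_num [max_def]

lemma th_A_8 : Theta (3/4) 8 (3329/4636 : ℝ) = (3916089/5482556 : ℝ) := by
  rw [Theta, it_A_8]; norm_num [max_def]

lemma th_A_9 : Theta (3/4) 9 (3329/4636 : ℝ) = (8615333/15664356 : ℝ) := by
  rw [Theta, it_A_9]; norm_num [max_def]

lemma th_A_10 : Theta (3/4) 10 (3329/4636 : ℝ) = (22713379/34461332 : ℝ) := by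
  rw [Theta, it_A_10]; norm_num [max_def]

lemma th_A_11 : Theta (3/4) 11 (3329/4636 : ℝ) = (46209285/90853516 : ℝ) := by
  rw [Theta, it_A_11]; norm_num [max_def]

lemma th_A_12 : Theta (3/4) 12 (3329/4636 : ℝ) = (135497747/184837140 : ℝ) := by
  rw [Theta, it_A_12]; norm_num [max_def]

lemma th_A_13 : Theta (3/4) 13 (3329/4636 : ℝ) = (307814455/541990988 : ℝ) := by
  rw [Theta, it_A_13]; norm_num [max_def]

lemma th_A_14 : Theta (3/4) 14 (3329/4636 : ℝ) = (776167521/1231257820 : ℝ) := by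
  rw [Theta, it_A_14]; norm_num [max_def]

lemma th_A_15 : Theta (3/4) 15 (3329/4636 : ℝ) = (1686348119/3104670084 : ℝ) := by
  rw [Theta, it_A_15]; norm_num [max_def]

lemma th_A_16 : Theta (3/4) 16 (3329/4636 : ℝ) = (4522992049/6745392476 : ℝ) := by
  rw [Theta, it_A_16]; norm_num [max_def]

lemma th_A_17 : Theta (3/4) 17 (3329/4636 : ℝ) = (9124175293/18091968196 : ℝ) := by
  rw [Theta, it_A_17]; norm_num [max_def]

lemma th_A_18 : Theta (3/4) 18 (3329/4636 : ℝ) = (27059761099/36496701172 : ℝ) := by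
  rw [Theta, it_A_18]; norm_num [max_def]

lemma th_A_19 : Theta (3/4) 19 (3329/4636 : ℝ) = (62305403151/108239044396 : ℝ) := by
  rw [Theta, it_A_19]; norm_num [max_def]

lemma th_A_20 : Theta (3/4) 20 (3329/4636 : ℝ) = (154172685641/249221612604 : ℝ) := by
  rw [Theta, it_A_20]; norm_num [max_def]

lemma th_A_21 : Theta (3/4) 21 (3329/4636 : ℝ) = (344270539567/616690742564 : ℝ) := by
  rw [Theta, it_A_21]; norm_num [max_def]

lemma th_A_22 : Theta (3/4) 22 (3329/4636 : ℝ) = (889110945561/1377082158268 : ℝ) := by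
  rw [Theta, it_A_22]; norm_num [max_def]

lemma th_A_23 : Theta (3/4) 23 (3329/4636 : ℝ) = (1865053370975/3556443782244 : ℝ) := by
  rw [Theta, it_A_23]; norm_num [max_def]

lemma th_A_24 : Theta (3/4) 24 (3329/4636 : ℝ) = (5247834193513/7460213483900 : ℝ) := by
  rw [Theta, it_A_24]; norm_num [max_def]

lemma pr_A_1 : ∏ k ∈ Finset.range 1, Theta (3/4) k (3329/4636 : ℝ) = (3329/4636 : ℝ) := by
  rw [Finset.prod_range_one, th_A_0]

lemma pr_A_2 : ∏ k ∈ Finset.range 2, Theta (3/4) k (3329/4636 : ℝ) = (7373/18544 : ℝ) := by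
  rw [Finset.prod_range_succ, pr_A_1, th_A_1]; norm_num

lemma pr_A_3 : ∏ k ∈ Finset.range 3, Theta (3/4) k (3329/4636 : ℝ) = (19259/74176 : ℝ) := by
  rw [Finset.prod_range_succ, pr_A_2, th_A_2]; norm_num

lemma pr_A_4 : ∏ k ∈ Finset.range 4, Theta (3/4) k (3329/4636 : ℝ) = (39725/296704 : ℝ) := by
  rw [Finset.prod_range_succ, pr_A_3, th_A_3]; norm_num

lemma pr_A_5 : ∏ k ∈ Finset.range 5, Theta (3/4) k (3329/4636 : ℝ) = (114347/1186816 : ℝ) := by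
  rw [Finset.prod_range_succ, pr_A_4, th_A_4]; norm_num

lemma pr_A_6 : ∏ k ∈ Finset.range 6, Theta (3/4) k (3329/4636 : ℝ) = (13365/249856 : ℝ) := by
  rw [Finset.prod_range_succ, pr_A_5, th_A_5]; norm_num

lemma pr_A_7 : ∏ k ∈ Finset.range 7, Theta (3/4) k (3329/4636 : ℝ) = (660841/18989056 : ℝ) := by
  rw [Finset.prod_range_succ, pr_A_6, th_A_6]; norm_num

lemma pr_A_8 : ∏ k ∈ Finset.range 8, Theta (3/4) k (3329/4636 : ℝ) = (1370639/75956224 : ℝ) := by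
  rw [Finset.prod_range_succ, pr_A_7, th_A_7]; norm_num

lemma pr_A_9 : ∏ k ∈ Finset.range 9, Theta (3/4) k (3329/4636 : ℝ) = (3916089/303824896 : ℝ) := by
  rw [Finset.prod_range_succ, pr_A_8, th_A_8]; norm_num

lemma pr_A_10 : ∏ k ∈ Finset.range 10, Theta (3/4) k (3329/4636 : ℝ) = (8615333/1215299584 : ℝ) := by
  rw [Finset.prod_range_succ, pr_A_9, th_A_9]; norm_num

lemma pr_A_11 : ∏ k ∈ Finset.range 11, Theta (3/4) k (3329/4636 : ℝ) = (1195441/255852544 : ℝ) := by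
  rw [Finset.prod_range_succ, pr_A_10, th_A_10]; norm_num

lemma pr_A_12 : ∏ k ∈ Finset.range 12, Theta (3/4) k (3329/4636 : ℝ) = (46209285/19444793344 : ℝ) := by
  rw [Finset.prod_range_succ, pr_A_11, th_A_11]; norm_num

lemma pr_A_13 : ∏ k ∈ Finset.range 13, Theta (3/4) k (3329/4636 : ℝ) = (135497747/77779173376 : ℝ) := by
  rw [Finset.prod_range_succ, pr_A_12, th_A_12]; norm_num

lemma pr_A_14 : ∏ k ∈ Finset.range 14, Theta (3/4) k (3329/4636 : ℝ) = (307814455/311116693504 : ℝ) := by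
  rw [Finset.prod_range_succ, pr_A_13, th_A_13]; norm_num

lemma pr_A_15 : ∏ k ∈ Finset.range 15, Theta (3/4) k (3329/4636 : ℝ) = (776167521/1244466774016 : ℝ) := by
  rw [Finset.prod_range_succ, pr_A_14, th_A_14]; norm_num

lemma pr_A_16 : ∏ k ∈ Finset.range 16, Theta (3/4) k (3329/4636 : ℝ) = (1686348119/4977867096064 : ℝ) := by
  rw [Finset.prod_range_succ, pr_A_15, th_A_15]; norm_num

lemma pr_A_17 : ∏ k ∈ Finset.range 17, Theta (3/4) k (3329/4636 : ℝ) = (4522992049/19911468384256 : ℝ) := by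
  rw [Finset.prod_range_succ, pr_A_16, th_A_16]; norm_num

lemma pr_A_18 : ∏ k ∈ Finset.range 18, Theta (3/4) k (3329/4636 : ℝ) = (9124175293/79645873537024 : ℝ) := by
  rw [Finset.prod_range_succ, pr_A_17, th_A_17]; norm_num

lemma pr_A_19 : ∏ k ∈ Finset.range 19, Theta (3/4) k (3329/4636 : ℝ) = (27059761099/318583494148096 : ℝ) := by
  rw [Finset.prod_range_succ, pr_A_18, th_A_18]; norm_num

lemma pr_A_20 : ∏ k ∈ Finset.range 20, Theta (3/4) k (3329/4636 : ℝ) = (62305403151/1274333976592384 : ℝ) := by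
  rw [Finset.prod_range_succ, pr_A_19, th_A_19]; norm_num

lemma pr_A_21 : ∏ k ∈ Finset.range 21, Theta (3/4) k (3329/4636 : ℝ) = (154172685641/5097335906369536 : ℝ) := by
  rw [Finset.prod_range_succ, pr_A_20, th_A_20]; norm_num

lemma pr_A_22 : ∏ k ∈ Finset.range 22, Theta (3/4) k (3329/4636 : ℝ) = (344270539567/20389343625478144 : ℝ) := by
  rw [Finset.prod_range_succ, pr_A_21, th_A_21]; norm_num

lemma pr_A_23 : ∏ k ∈ Finset.range 23, Theta (3/4) k (3329/4636 : ℝ) = (889110945561/81557374501912576 : ℝ) := by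
  rw [Finset.prod_range_succ, pr_A_22, th_A_22]; norm_num

lemma pr_A_24 : ∏ k ∈ Finset.range 24, Theta (3/4) k (3329/4636 : ℝ) = (1865053370975/326229498007650304 : ℝ) := by
  rw [Finset.prod_range_succ, pr_A_23, th_A_23]; norm_num

lemma pr_A_25 : ∏ k ∈ Finset.range 25, Theta (3/4) k (3329/4636 : ℝ) = (5247834193513/1304917992030601216 : ℝ) := by
  rw [Finset.prod_range_succ, pr_A_24, th_A_24]; norm_num

lemma su_A : ∑ n ∈ Finset.range 25, ∏ k ∈ Finset.range n, Theta (3/4) k (3329/4636 : ℝ) = (894894133159970547/326229498007650304 : ℝ) := by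
  simp only [Finset.sum_range_succ, Finset.sum_range_zero, Finset.prod_range_zero, pr_A_1, pr_A_2, pr_A_3, pr_A_4, pr_A_5, pr_A_6, pr_A_7, pr_A_8, pr_A_9, pr_A_10, pr_A_11, pr_A_12, pr_A_13, pr_A_14, pr_A_15, pr_A_16, pr_A_17, pr_A_18, pr_A_19, pr_A_20, pr_A_21, pr_A_22, pr_A_23, pr_A_24]
  norm_num

lemma it_B_1 : (Phi (3/4))^[1] (33073/46360 : ℝ) = (72645/132292 : ℝ) := by
  rw [Function.iterate_one]; norm_num [Phi, fB, fT]

lemma it_B_2 : (Phi (3/4))^[2] (33073/46360 : ℝ) = (98641/290580 : ℝ) := by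
  rw [Function.iterate_succ_apply', it_B_1]; norm_num [Phi, fB, fT]

lemma it_B_3 : (Phi (3/4))^[3] (33073/46360 : ℝ) = (389221/767756 : ℝ) := by
  rw [Function.iterate_succ_apply', it_B_2]; norm_num [Phi, fB, fT]

lemma it_B_4 : (Phi (3/4))^[4] (33073/46360 : ℝ) = (410593/1556884 : ℝ) := by
  rw [Function.iterate_succ_apply', it_B_3]; norm_num [Phi, fB, fT]

lemma it_B_5 : (Phi (3/4))^[5] (33073/46360 : ℝ) = (1967477/4585164 : ℝ) := by
  rw [Function.iterate_succ_apply', it_B_4]; norm_num [Phi, fB, fT]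

lemma it_B_6 : (Phi (3/4))^[6] (33073/46360 : ℝ) = (6552641/10470748 : ℝ) := by
  rw [Function.iterate_succ_apply', it_B_5]; norm_num [Phi, fB, fT]

lemma it_B_7 : (Phi (3/4))^[7] (33073/46360 : ℝ) = (11821709/26210564 : ℝ) := by
  rw [Function.iterate_succ_apply', it_B_6]; norm_num [Phi, fB, fT]

lemma it_B_8 : (Phi (3/4))^[8] (33073/46360 : ℝ) = (38032273/57555420 : ℝ) := by
  rw [Function.iterate_succ_apply', it_B_7]; norm_num [Phi, fB, fT]

lemma it_B_9 : (Phi (3/4))^[9] (33073/46360 : ℝ) = (75050525/152129092 : ℝ) := by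
  rw [Function.iterate_succ_apply', it_B_8]; norm_num [Phi, fB, fT]

lemma it_B_10 : (Phi (3/4))^[10] (33073/46360 : ℝ) = (227179617/308314268 : ℝ) := by
  rw [Function.iterate_succ_apply', it_B_9]; norm_num [Phi, fB, fT]

lemma it_B_11 : (Phi (3/4))^[11] (33073/46360 : ℝ) = (519269549/908718468 : ℝ) := by
  rw [Function.iterate_succ_apply', it_B_10]; norm_num [Phi, fB, fT]

lemma it_B_12 : (Phi (3/4))^[12] (33073/46360 : ℝ) = (778910809/2077078196 : ℝ) := by
  rw [Function.iterate_succ_apply', it_B_11]; norm_num [Phi, fB, fT]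

lemma it_B_13 : (Phi (3/4))^[13] (33073/46360 : ℝ) = (2855989005/5192669548 : ℝ) := by
  rw [Function.iterate_succ_apply', it_B_12]; norm_num [Phi, fB, fT]

lemma it_B_14 : (Phi (3/4))^[14] (33073/46360 : ℝ) = (3894605929/11423956020 : ℝ) := by
  rw [Function.iterate_succ_apply', it_B_13]; norm_num [Phi, fB, fT]

lemma it_B_15 : (Phi (3/4))^[15] (33073/46360 : ℝ) = (15318561949/30117400364 : ℝ) := by
  rw [Function.iterate_succ_apply', it_B_14]; norm_num [Phi, fB, fT]

lemma it_B_16 : (Phi (3/4))^[16] (33073/46360 : ℝ) = (16358009017/61274247796 : ℝ) := by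
  rw [Function.iterate_succ_apply', it_B_15]; norm_num [Phi, fB, fT]

lemma it_B_17 : (Phi (3/4))^[17] (33073/46360 : ℝ) = (77632256813/179664955116 : ℝ) := by
  rw [Function.iterate_succ_apply', it_B_16]; norm_num [Phi, fB, fT]

lemma it_B_18 : (Phi (3/4))^[18] (33073/46360 : ℝ) = (257297211929/408130793212 : ℝ) := by
  rw [Function.iterate_succ_apply', it_B_17]; norm_num [Phi, fB, fT]

lemma it_B_19 : (Phi (3/4))^[19] (33073/46360 : ℝ) = (470224473221/1029188847716 : ℝ) := by
  rw [Function.iterate_succ_apply', it_B_18]; norm_num [Phi, fB, fT]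

lemma it_B_20 : (Phi (3/4))^[20] (33073/46360 : ℝ) = (1499413320937/2235857497980 : ℝ) := by
  rw [Function.iterate_succ_apply', it_B_19]; norm_num [Phi, fB, fT]

lemma it_B_21 : (Phi (3/4))^[21] (33073/46360 : ℝ) = (3025351608725/5997653283748 : ℝ) := by
  rw [Function.iterate_succ_apply', it_B_20]; norm_num [Phi, fB, fT]

lemma it_B_22 : (Phi (3/4))^[22] (33073/46360 : ℝ) = (3131451476129/12101406434900 : ℝ) := by
  rw [Function.iterate_succ_apply', it_B_21]; norm_num [Phi, fB, fT]

lemma it_B_23 : (Phi (3/4))^[23] (33073/46360 : ℝ) = (15232857911029/35879819835084 : ℝ) := by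
  rw [Function.iterate_succ_apply', it_B_22]; norm_num [Phi, fB, fT]

lemma it_B_24 : (Phi (3/4))^[24] (33073/46360 : ℝ) = (51112677746113/82587847696220 : ℝ) := by
  rw [Function.iterate_succ_apply', it_B_23]; norm_num [Phi, fB, fT]

lemma th_B_0 : Theta (3/4) 0 (33073/46360 : ℝ) = (33073/46360 : ℝ) := by
  rw [Theta, Function.iterate_zero_apply]; norm_num [max_def]

lemma th_B_1 : Theta (3/4) 1 (33073/46360 : ℝ) = (72645/132292 : ℝ) := by
  rw [Theta, it_B_1]; norm_num [max_def]

lemma th_B_2 : Theta (3/4) 2 (33073/46360 : ℝ) = (191939/290580 : ℝ) := by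
  rw [Theta, it_B_2]; norm_num [max_def]

lemma th_B_3 : Theta (3/4) 3 (33073/46360 : ℝ) = (389221/767756 : ℝ) := by
  rw [Theta, it_B_3]; norm_num [max_def]

lemma th_B_4 : Theta (3/4) 4 (33073/46360 : ℝ) = (1146291/1556884 : ℝ) := by
  rw [Theta, it_B_4]; norm_num [max_def]

lemma th_B_5 : Theta (3/4) 5 (33073/46360 : ℝ) = (2617687/4585164 : ℝ) := by
  rw [Theta, it_B_5]; norm_num [max_def]

lemma th_B_6 : Theta (3/4) 6 (33073/46360 : ℝ) = (6552641/10470748 : ℝ) := by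
  rw [Theta, it_B_6]; norm_num [max_def]

lemma th_B_7 : Theta (3/4) 7 (33073/46360 : ℝ) = (14388855/26210564 : ℝ) := by
  rw [Theta, it_B_7]; norm_num [max_def]

lemma th_B_8 : Theta (3/4) 8 (33073/46360 : ℝ) = (38032273/57555420 : ℝ) := by
  rw [Theta, it_B_8]; norm_num [max_def]

lemma th_B_9 : Theta (3/4) 9 (33073/46360 : ℝ) = (77078567/152129092 : ℝ) := by
  rw [Theta, it_B_9]; norm_num [max_def]

lemma th_B_10 : Theta (3/4) 10 (33073/46360 : ℝ) = (227179617/308314268 : ℝ) := by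
  rw [Theta, it_B_10]; norm_num [max_def]

lemma th_B_11 : Theta (3/4) 11 (33073/46360 : ℝ) = (519269549/908718468 : ℝ) := by
  rw [Theta, it_B_11]; norm_num [max_def]

lemma th_B_12 : Theta (3/4) 12 (33073/46360 : ℝ) = (1298167387/2077078196 : ℝ) := by
  rw [Theta, it_B_12]; norm_num [max_def]

lemma th_B_13 : Theta (3/4) 13 (33073/46360 : ℝ) = (2855989005/5192669548 : ℝ) := by
  rw [Theta, it_B_13]; norm_num [max_def]

lemma th_B_14 : Theta (3/4) 14 (33073/46360 : ℝ) = (7529350091/11423956020 : ℝ) := by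
  rw [Theta, it_B_14]; norm_num [max_def]

lemma th_B_15 : Theta (3/4) 15 (33073/46360 : ℝ) = (15318561949/30117400364 : ℝ) := by
  rw [Theta, it_B_15]; norm_num [max_def]

lemma th_B_16 : Theta (3/4) 16 (33073/46360 : ℝ) = (44916238779/61274247796 : ℝ) := by
  rw [Theta, it_B_16]; norm_num [max_def]

lemma th_B_17 : Theta (3/4) 17 (33073/46360 : ℝ) = (102032698303/179664955116 : ℝ) := by
  rw [Theta, it_B_17]; norm_num [max_def]

lemma th_B_18 : Theta (3/4) 18 (33073/46360 : ℝ) = (257297211929/408130793212 : ℝ) := by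
  rw [Theta, it_B_18]; norm_num [max_def]

lemma th_B_19 : Theta (3/4) 19 (33073/46360 : ℝ) = (558964374495/1029188847716 : ℝ) := by
  rw [Theta, it_B_19]; norm_num [max_def]

lemma th_B_20 : Theta (3/4) 20 (33073/46360 : ℝ) = (1499413320937/2235857497980 : ℝ) := by
  rw [Theta, it_B_20]; norm_num [max_def]

lemma th_B_21 : Theta (3/4) 21 (33073/46360 : ℝ) = (3025351608725/5997653283748 : ℝ) := by
  rw [Theta, it_B_21]; norm_num [max_def]

lemma th_B_22 : Theta (3/4) 22 (33073/46360 : ℝ) = (8969954958771/12101406434900 : ℝ) := by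
  rw [Theta, it_B_22]; norm_num [max_def]

lemma th_B_23 : Theta (3/4) 23 (33073/46360 : ℝ) = (20646961924055/35879819835084 : ℝ) := by
  rw [Theta, it_B_23]; norm_num [max_def]

lemma th_B_24 : Theta (3/4) 24 (33073/46360 : ℝ) = (51112677746113/82587847696220 : ℝ) := by
  rw [Theta, it_B_24]; norm_num [max_def]

lemma pr_B_1 : ∏ k ∈ Finset.range 1, Theta (3/4) k (33073/46360 : ℝ) = (33073/46360 : ℝ) := by
  rw [Finset.prod_range_one, th_B_0]

lemma pr_B_2 : ∏ k ∈ Finset.range 2, Theta (3/4) k (33073/46360 : ℝ) = (14529/37088 : ℝ) := by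
  rw [Finset.prod_range_succ, pr_B_1, th_B_1]; norm_num

lemma pr_B_3 : ∏ k ∈ Finset.range 3, Theta (3/4) k (33073/46360 : ℝ) = (191939/741760 : ℝ) := by
  rw [Finset.prod_range_succ, pr_B_2, th_B_2]; norm_num

lemma pr_B_4 : ∏ k ∈ Finset.range 4, Theta (3/4) k (33073/46360 : ℝ) = (389221/2967040 : ℝ) := by
  rw [Finset.prod_range_succ, pr_B_3, th_B_3]; norm_num

lemma pr_B_5 : ∏ k ∈ Finset.range 5, Theta (3/4) k (33073/46360 : ℝ) = (1146291/11868160 : ℝ) := by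
  rw [Finset.prod_range_succ, pr_B_4, th_B_4]; norm_num

lemma pr_B_6 : ∏ k ∈ Finset.range 6, Theta (3/4) k (33073/46360 : ℝ) = (137773/2498560 : ℝ) := by
  rw [Finset.prod_range_succ, pr_B_5, th_B_5]; norm_num

lemma pr_B_7 : ∏ k ∈ Finset.range 7, Theta (3/4) k (33073/46360 : ℝ) = (6552641/189890560 : ℝ) := by
  rw [Finset.prod_range_succ, pr_B_6, th_B_6]; norm_num

lemma pr_B_8 : ∏ k ∈ Finset.range 8, Theta (3/4) k (33073/46360 : ℝ) = (2877771/151912448 : ℝ) := by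
  rw [Finset.prod_range_succ, pr_B_7, th_B_7]; norm_num

lemma pr_B_9 : ∏ k ∈ Finset.range 9, Theta (3/4) k (33073/46360 : ℝ) = (38032273/3038248960 : ℝ) := by
  rw [Finset.prod_range_succ, pr_B_8, th_B_8]; norm_num

lemma pr_B_10 : ∏ k ∈ Finset.range 10, Theta (3/4) k (33073/46360 : ℝ) = (77078567/12152995840 : ℝ) := by
  rw [Finset.prod_range_succ, pr_B_9, th_B_9]; norm_num

lemma pr_B_11 : ∏ k ∈ Finset.range 11, Theta (3/4) k (33073/46360 : ℝ) = (227179617/48611983360 : ℝ) := by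
  rw [Finset.prod_range_succ, pr_B_10, th_B_10]; norm_num

lemma pr_B_12 : ∏ k ∈ Finset.range 12, Theta (3/4) k (33073/46360 : ℝ) = (519269549/194447933440 : ℝ) := by
  rw [Finset.prod_range_succ, pr_B_11, th_B_11]; norm_num

lemma pr_B_13 : ∏ k ∈ Finset.range 13, Theta (3/4) k (33073/46360 : ℝ) = (1298167387/777791733760 : ℝ) := by
  rw [Finset.prod_range_succ, pr_B_12, th_B_12]; norm_num

lemma pr_B_14 : ∏ k ∈ Finset.range 14, Theta (3/4) k (33073/46360 : ℝ) = (571197801/622233387008 : ℝ) := by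
  rw [Finset.prod_range_succ, pr_B_13, th_B_13]; norm_num

lemma pr_B_15 : ∏ k ∈ Finset.range 15, Theta (3/4) k (33073/46360 : ℝ) = (7529350091/12444667740160 : ℝ) := by
  rw [Finset.prod_range_succ, pr_B_14, th_B_14]; norm_num

lemma pr_B_16 : ∏ k ∈ Finset.range 16, Theta (3/4) k (33073/46360 : ℝ) = (15318561949/49778670960640 : ℝ) := by
  rw [Finset.prod_range_succ, pr_B_15, th_B_15]; norm_num

lemma pr_B_17 : ∏ k ∈ Finset.range 17, Theta (3/4) k (33073/46360 : ℝ) = (44916238779/199114683842560 : ℝ) := by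
  rw [Finset.prod_range_succ, pr_B_16, th_B_16]; norm_num

lemma pr_B_18 : ∏ k ∈ Finset.range 18, Theta (3/4) k (33073/46360 : ℝ) = (102032698303/796458735370240 : ℝ) := by
  rw [Finset.prod_range_succ, pr_B_17, th_B_17]; norm_num

lemma pr_B_19 : ∏ k ∈ Finset.range 19, Theta (3/4) k (33073/46360 : ℝ) = (257297211929/3185834941480960 : ℝ) := by
  rw [Finset.prod_range_succ, pr_B_18, th_B_18]; norm_num

lemma pr_B_20 : ∏ k ∈ Finset.range 20, Theta (3/4) k (33073/46360 : ℝ) = (5883835521/134140418588672 : ℝ) := by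
  rw [Finset.prod_range_succ, pr_B_19, th_B_19]; norm_num

lemma pr_B_21 : ∏ k ∈ Finset.range 21, Theta (3/4) k (33073/46360 : ℝ) = (1499413320937/50973359063695360 : ℝ) := by
  rw [Finset.prod_range_succ, pr_B_20, th_B_20]; norm_num

lemma pr_B_22 : ∏ k ∈ Finset.range 22, Theta (3/4) k (33073/46360 : ℝ) = (605070321745/40778687250956288 : ℝ) := by
  rw [Finset.prod_range_succ, pr_B_21, th_B_21]; norm_num

lemma pr_B_23 : ∏ k ∈ Finset.range 23, Theta (3/4) k (33073/46360 : ℝ) = (8969954958771/815573745019125760 : ℝ) := by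
  rw [Finset.prod_range_succ, pr_B_22, th_B_22]; norm_num

lemma pr_B_24 : ∏ k ∈ Finset.range 24, Theta (3/4) k (33073/46360 : ℝ) = (4129392384811/652458996015300608 : ℝ) := by
  rw [Finset.prod_range_succ, pr_B_23, th_B_23]; norm_num

lemma pr_B_25 : ∏ k ∈ Finset.range 25, Theta (3/4) k (33073/46360 : ℝ) = (51112677746113/13049179920306012160 : ℝ) := by
  rw [Finset.prod_range_succ, pr_B_24, th_B_24]; norm_num

lemma su_B : ∑ n ∈ Finset.range 25, ∏ k ∈ Finset.range n, Theta (3/4) k (33073/46360 : ℝ) = (8907707547558675763/3262294980076503040 : ℝ) := by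
  simp only [Finset.sum_range_succ, Finset.sum_range_zero, Finset.prod_range_zero, pr_B_1, pr_B_2, pr_B_3, pr_B_4, pr_B_5, pr_B_6, pr_B_7, pr_B_8, pr_B_9, pr_B_10, pr_B_11, pr_B_12, pr_B_13, pr_B_14, pr_B_15, pr_B_16, pr_B_17, pr_B_18, pr_B_19, pr_B_20, pr_B_21, pr_B_22, pr_B_23, pr_B_24]
  norm_num

lemma it_C_1 : (Phi (3/4))^[1] (51/200 : ℝ) = (251/596 : ℝ) := by
  rw [Function.iterate_one]; norm_num [Phi, fB, fT]

lemma it_C_2 : (Phi (3/4))^[2] (51/200 : ℝ) = (847/1380 : ℝ) := by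
  rw [Function.iterate_succ_apply', it_C_1]; norm_num [Phi, fB, fT]

lemma it_C_3 : (Phi (3/4))^[3] (51/200 : ℝ) = (1475/3388 : ℝ) := by
  rw [Function.iterate_succ_apply', it_C_2]; norm_num [Phi, fB, fT]

lemma it_C_4 : (Phi (3/4))^[4] (51/200 : ℝ) = (4863/7652 : ℝ) := by
  rw [Function.iterate_succ_apply', it_C_3]; norm_num [Phi, fB, fT]

lemma it_C_5 : (Phi (3/4))^[5] (51/200 : ℝ) = (9011/19452 : ℝ) := by
  rw [Function.iterate_succ_apply', it_C_4]; norm_num [Phi, fB, fT]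

lemma it_C_6 : (Phi (3/4))^[6] (51/200 : ℝ) = (28463/41764 : ℝ) := by
  rw [Function.iterate_succ_apply', it_C_5]; norm_num [Phi, fB, fT]

lemma it_C_7 : (Phi (3/4))^[7] (51/200 : ℝ) = (58787/113852 : ℝ) := by
  rw [Function.iterate_succ_apply', it_C_6]; norm_num [Phi, fB, fT]

lemma it_C_8 : (Phi (3/4))^[8] (51/200 : ℝ) = (66231/235148 : ℝ) := by
  rw [Function.iterate_succ_apply', it_C_7]; norm_num [Phi, fB, fT]

lemma it_C_9 : (Phi (3/4))^[9] (51/200 : ℝ) = (301379/675668 : ℝ) := by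
  rw [Function.iterate_succ_apply', it_C_8]; norm_num [Phi, fB, fT]

lemma it_C_10 : (Phi (3/4))^[10] (51/200 : ℝ) = (977047/1497156 : ℝ) := by
  rw [Function.iterate_succ_apply', it_C_9]; norm_num [Phi, fB, fT]

lemma it_C_11 : (Phi (3/4))^[11] (51/200 : ℝ) = (1890923/3908188 : ℝ) := by
  rw [Function.iterate_succ_apply', it_C_10]; norm_num [Phi, fB, fT]

lemma it_C_12 : (Phi (3/4))^[12] (51/200 : ℝ) = (5799111/8069060 : ℝ) := by
  rw [Function.iterate_succ_apply', it_C_11]; norm_num [Phi, fB, fT]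

lemma it_C_13 : (Phi (3/4))^[13] (51/200 : ℝ) = (12857435/23196444 : ℝ) := by
  rw [Function.iterate_succ_apply', it_C_12]; norm_num [Phi, fB, fT]

lemma it_C_14 : (Phi (3/4))^[14] (51/200 : ℝ) = (17894287/51429740 : ℝ) := by
  rw [Function.iterate_succ_apply', it_C_13]; norm_num [Phi, fB, fT]

lemma it_C_15 : (Phi (3/4))^[15] (51/200 : ℝ) = (69324027/134141812 : ℝ) := by
  rw [Function.iterate_succ_apply', it_C_14]; norm_num [Phi, fB, fT]

lemma it_C_16 : (Phi (3/4))^[16] (51/200 : ℝ) = (78336511/277296108 : ℝ) := by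
  rw [Function.iterate_succ_apply', it_C_15]; norm_num [Phi, fB, fT]

lemma it_C_17 : (Phi (3/4))^[17] (51/200 : ℝ) = (355632619/795838388 : ℝ) := by
  rw [Function.iterate_succ_apply', it_C_16]; norm_num [Phi, fB, fT]

lemma it_C_18 : (Phi (3/4))^[18] (51/200 : ℝ) = (1151471007/1760823076 : ℝ) := by
  rw [Function.iterate_succ_apply', it_C_17]; norm_num [Phi, fB, fT]

lemma it_C_19 : (Phi (3/4))^[19] (51/200 : ℝ) = (2235708883/4605884028 : ℝ) := by
  rw [Function.iterate_succ_apply', it_C_18]; norm_num [Phi, fB, fT]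

lemma it_C_20 : (Phi (3/4))^[20] (51/200 : ℝ) = (6841592911/9480700580 : ℝ) := by
  rw [Function.iterate_succ_apply', it_C_19]; norm_num [Phi, fB, fT]

lemma it_C_21 : (Phi (3/4))^[21] (51/200 : ℝ) = (15246563395/27366371644 : ℝ) := by
  rw [Function.iterate_succ_apply', it_C_20]; norm_num [Phi, fB, fT]

lemma it_C_22 : (Phi (3/4))^[22] (51/200 : ℝ) = (21500073687/60986253580 : ℝ) := by
  rw [Function.iterate_succ_apply', it_C_21]; norm_num [Phi, fB, fT]

lemma it_C_23 : (Phi (3/4))^[23] (51/200 : ℝ) = (82486327267/157944719572 : ℝ) := by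
  rw [Function.iterate_succ_apply', it_C_22]; norm_num [Phi, fB, fT]

lemma it_C_24 : (Phi (3/4))^[24] (51/200 : ℝ) = (96542197191/329945309068 : ℝ) := by
  rw [Function.iterate_succ_apply', it_C_23]; norm_num [Phi, fB, fT]

lemma th_C_0 : Theta (3/4) 0 (51/200 : ℝ) = (149/200 : ℝ) := by
  rw [Theta, Function.iterate_zero_apply]; norm_num [max_def]

lemma th_C_1 : Theta (3/4) 1 (51/200 : ℝ) = (345/596 : ℝ) := by
  rw [Theta, it_C_1]; norm_num [max_def]

lemma th_C_2 : Theta (3/4) 2 (51/200 : ℝ) = (847/1380 : ℝ) := by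
  rw [Theta, it_C_2]; norm_num [max_def]

lemma th_C_3 : Theta (3/4) 3 (51/200 : ℝ) = (1913/3388 : ℝ) := by
  rw [Theta, it_C_3]; norm_num [max_def]

lemma th_C_4 : Theta (3/4) 4 (51/200 : ℝ) = (4863/7652 : ℝ) := by
  rw [Theta, it_C_4]; norm_num [max_def]

lemma th_C_5 : Theta (3/4) 5 (51/200 : ℝ) = (10441/19452 : ℝ) := by
  rw [Theta, it_C_5]; norm_num [max_def]

lemma th_C_6 : Theta (3/4) 6 (51/200 : ℝ) = (28463/41764 : ℝ) := by
  rw [Theta, it_C_6]; norm_num [max_def]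

lemma th_C_7 : Theta (3/4) 7 (51/200 : ℝ) = (58787/113852 : ℝ) := by
  rw [Theta, it_C_7]; norm_num [max_def]

lemma th_C_8 : Theta (3/4) 8 (51/200 : ℝ) = (168917/235148 : ℝ) := by
  rw [Theta, it_C_8]; norm_num [max_def]

lemma th_C_9 : Theta (3/4) 9 (51/200 : ℝ) = (374289/675668 : ℝ) := by
  rw [Theta, it_C_9]; norm_num [max_def]

lemma th_C_10 : Theta (3/4) 10 (51/200 : ℝ) = (977047/1497156 : ℝ) := by
  rw [Theta, it_C_10]; norm_num [max_def]

lemma th_C_11 : Theta (3/4) 11 (51/200 : ℝ) = (2017265/3908188 : ℝ) := by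
  rw [Theta, it_C_11]; norm_num [max_def]

lemma th_C_12 : Theta (3/4) 12 (51/200 : ℝ) = (5799111/8069060 : ℝ) := by
  rw [Theta, it_C_12]; norm_num [max_def]

lemma th_C_13 : Theta (3/4) 13 (51/200 : ℝ) = (12857435/23196444 : ℝ) := by
  rw [Theta, it_C_13]; norm_num [max_def]

lemma th_C_14 : Theta (3/4) 14 (51/200 : ℝ) = (33535453/51429740 : ℝ) := by
  rw [Theta, it_C_14]; norm_num [max_def]

lemma th_C_15 : Theta (3/4) 15 (51/200 : ℝ) = (69324027/134141812 : ℝ) := by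
  rw [Theta, it_C_15]; norm_num [max_def]

lemma th_C_16 : Theta (3/4) 16 (51/200 : ℝ) = (198959597/277296108 : ℝ) := by
  rw [Theta, it_C_16]; norm_num [max_def]

lemma th_C_17 : Theta (3/4) 17 (51/200 : ℝ) = (440205769/795838388 : ℝ) := by
  rw [Theta, it_C_17]; norm_num [max_def]

lemma th_C_18 : Theta (3/4) 18 (51/200 : ℝ) = (1151471007/1760823076 : ℝ) := by
  rw [Theta, it_C_18]; norm_num [max_def]

lemma th_C_19 : Theta (3/4) 19 (51/200 : ℝ) = (2370175145/4605884028 : ℝ) := by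
  rw [Theta, it_C_19]; norm_num [max_def]

lemma th_C_20 : Theta (3/4) 20 (51/200 : ℝ) = (6841592911/9480700580 : ℝ) := by
  rw [Theta, it_C_20]; norm_num [max_def]

lemma th_C_21 : Theta (3/4) 21 (51/200 : ℝ) = (15246563395/27366371644 : ℝ) := by
  rw [Theta, it_C_21]; norm_num [max_def]

lemma th_C_22 : Theta (3/4) 22 (51/200 : ℝ) = (39486179893/60986253580 : ℝ) := by
  rw [Theta, it_C_22]; norm_num [max_def]

lemma th_C_23 : Theta (3/4) 23 (51/200 : ℝ) = (82486327267/157944719572 : ℝ) := by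
  rw [Theta, it_C_23]; norm_num [max_def]

lemma th_C_24 : Theta (3/4) 24 (51/200 : ℝ) = (233403111877/329945309068 : ℝ) := by
  rw [Theta, it_C_24]; norm_num [max_def]

lemma pr_C_1 : ∏ k ∈ Finset.range 1, Theta (3/4) k (51/200 : ℝ) = (149/200 : ℝ) := by
  rw [Finset.prod_range_one, th_C_0]

lemma pr_C_2 : ∏ k ∈ Finset.range 2, Theta (3/4) k (51/200 : ℝ) = (69/160 : ℝ) := by
  rw [Finset.prod_range_succ, pr_C_1, th_C_1]; norm_num

lemma pr_C_3 : ∏ k ∈ Finset.range 3, Theta (3/4) k (51/200 : ℝ) = (847/3200 : ℝ) := by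
  rw [Finset.prod_range_succ, pr_C_2, th_C_2]; norm_num

lemma pr_C_4 : ∏ k ∈ Finset.range 4, Theta (3/4) k (51/200 : ℝ) = (1913/12800 : ℝ) := by
  rw [Finset.prod_range_succ, pr_C_3, th_C_3]; norm_num

lemma pr_C_5 : ∏ k ∈ Finset.range 5, Theta (3/4) k (51/200 : ℝ) = (4863/51200 : ℝ) := by
  rw [Finset.prod_range_succ, pr_C_4, th_C_4]; norm_num

lemma pr_C_6 : ∏ k ∈ Finset.range 6, Theta (3/4) k (51/200 : ℝ) = (10441/204800 : ℝ) := by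
  rw [Finset.prod_range_succ, pr_C_5, th_C_5]; norm_num

lemma pr_C_7 : ∏ k ∈ Finset.range 7, Theta (3/4) k (51/200 : ℝ) = (28463/819200 : ℝ) := by
  rw [Finset.prod_range_succ, pr_C_6, th_C_6]; norm_num

lemma pr_C_8 : ∏ k ∈ Finset.range 8, Theta (3/4) k (51/200 : ℝ) = (58787/3276800 : ℝ) := by
  rw [Finset.prod_range_succ, pr_C_7, th_C_7]; norm_num

lemma pr_C_9 : ∏ k ∈ Finset.range 9, Theta (3/4) k (51/200 : ℝ) = (168917/13107200 : ℝ) := by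
  rw [Finset.prod_range_succ, pr_C_8, th_C_8]; norm_num

lemma pr_C_10 : ∏ k ∈ Finset.range 10, Theta (3/4) k (51/200 : ℝ) = (374289/52428800 : ℝ) := by
  rw [Finset.prod_range_succ, pr_C_9, th_C_9]; norm_num

lemma pr_C_11 : ∏ k ∈ Finset.range 11, Theta (3/4) k (51/200 : ℝ) = (977047/209715200 : ℝ) := by
  rw [Finset.prod_range_succ, pr_C_10, th_C_10]; norm_num

lemma pr_C_12 : ∏ k ∈ Finset.range 12, Theta (3/4) k (51/200 : ℝ) = (403453/167772160 : ℝ) := by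
  rw [Finset.prod_range_succ, pr_C_11, th_C_11]; norm_num

lemma pr_C_13 : ∏ k ∈ Finset.range 13, Theta (3/4) k (51/200 : ℝ) = (5799111/3355443200 : ℝ) := by
  rw [Finset.prod_range_succ, pr_C_12, th_C_12]; norm_num

lemma pr_C_14 : ∏ k ∈ Finset.range 14, Theta (3/4) k (51/200 : ℝ) = (2571487/2684354560 : ℝ) := by
  rw [Finset.prod_range_succ, pr_C_13, th_C_13]; norm_num

lemma pr_C_15 : ∏ k ∈ Finset.range 15, Theta (3/4) k (51/200 : ℝ) = (33535453/53687091200 : ℝ) := by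
  rw [Finset.prod_range_succ, pr_C_14, th_C_14]; norm_num

lemma pr_C_16 : ∏ k ∈ Finset.range 16, Theta (3/4) k (51/200 : ℝ) = (69324027/214748364800 : ℝ) := by
  rw [Finset.prod_range_succ, pr_C_15, th_C_15]; norm_num

lemma pr_C_17 : ∏ k ∈ Finset.range 17, Theta (3/4) k (51/200 : ℝ) = (198959597/858993459200 : ℝ) := by
  rw [Finset.prod_range_succ, pr_C_16, th_C_16]; norm_num

lemma pr_C_18 : ∏ k ∈ Finset.range 18, Theta (3/4) k (51/200 : ℝ) = (440205769/3435973836800 : ℝ) := by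
  rw [Finset.prod_range_succ, pr_C_17, th_C_17]; norm_num

lemma pr_C_19 : ∏ k ∈ Finset.range 19, Theta (3/4) k (51/200 : ℝ) = (1151471007/13743895347200 : ℝ) := by
  rw [Finset.prod_range_succ, pr_C_18, th_C_18]; norm_num

lemma pr_C_20 : ∏ k ∈ Finset.range 20, Theta (3/4) k (51/200 : ℝ) = (474035029/10995116277760 : ℝ) := by
  rw [Finset.prod_range_succ, pr_C_19, th_C_19]; norm_num

lemma pr_C_21 : ∏ k ∈ Finset.range 21, Theta (3/4) k (51/200 : ℝ) = (6841592911/219902325555200 : ℝ) := by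
  rw [Finset.prod_range_succ, pr_C_20, th_C_20]; norm_num

lemma pr_C_22 : ∏ k ∈ Finset.range 22, Theta (3/4) k (51/200 : ℝ) = (3049312679/175921860444160 : ℝ) := by
  rw [Finset.prod_range_succ, pr_C_21, th_C_21]; norm_num

lemma pr_C_23 : ∏ k ∈ Finset.range 23, Theta (3/4) k (51/200 : ℝ) = (39486179893/3518437208883200 : ℝ) := by
  rw [Finset.prod_range_succ, pr_C_22, th_C_22]; norm_num

lemma pr_C_24 : ∏ k ∈ Finset.range 24, Theta (3/4) k (51/200 : ℝ) = (82486327267/14073748835532800 : ℝ) := by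
  rw [Finset.prod_range_succ, pr_C_23, th_C_23]; norm_num

lemma pr_C_25 : ∏ k ∈ Finset.range 25, Theta (3/4) k (51/200 : ℝ) = (233403111877/56294995342131200 : ℝ) := by
  rw [Finset.prod_range_succ, pr_C_24, th_C_24]; norm_num

lemma su_C : ∑ n ∈ Finset.range 25, ∏ k ∈ Finset.range n, Theta (3/4) k (51/200 : ℝ) = (7938477205136059/2814749767106560 : ℝ) := by
  simp only [Finset.sum_range_succ, Finset.sum_range_zero, Finset.prod_range_zero, pr_C_1, pr_C_2, pr_C_3, pr_C_4, pr_C_5, pr_C_6, pr_C_7, pr_C_8, pr_C_9, pr_C_10, pr_C_11, pr_C_12, pr_C_13, pr_C_14, pr_C_15, pr_C_16, pr_C_17, pr_C_18, pr_C_19, pr_C_20, pr_C_21, pr_C_22, pr_C_23, pr_C_24]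
  norm_num

lemma it_D_1 : (Phi (3/4))^[1] (1/4 : ℝ) = (5/12 : ℝ) := by
  rw [Function.iterate_one]; norm_num [Phi, fB, fT]

lemma it_D_2 : (Phi (3/4))^[2] (1/4 : ℝ) = (17/28 : ℝ) := by
  rw [Function.iterate_succ_apply', it_D_1]; norm_num [Phi, fB, fT]

lemma it_D_3 : (Phi (3/4))^[3] (1/4 : ℝ) = (29/68 : ℝ) := by
  rw [Function.iterate_succ_apply', it_D_2]; norm_num [Phi, fB, fT]

lemma it_D_4 : (Phi (3/4))^[4] (1/4 : ℝ) = (97/156 : ℝ) := by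
  rw [Function.iterate_succ_apply', it_D_3]; norm_num [Phi, fB, fT]

lemma it_D_5 : (Phi (3/4))^[5] (1/4 : ℝ) = (173/388 : ℝ) := by
  rw [Function.iterate_succ_apply', it_D_4]; norm_num [Phi, fB, fT]

lemma it_D_6 : (Phi (3/4))^[6] (1/4 : ℝ) = (561/860 : ℝ) := by
  rw [Function.iterate_succ_apply', it_D_5]; norm_num [Phi, fB, fT]

lemma it_D_7 : (Phi (3/4))^[7] (1/4 : ℝ) = (1085/2244 : ℝ) := by
  rw [Function.iterate_succ_apply', it_D_6]; norm_num [Phi, fB, fT]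

lemma it_D_8 : (Phi (3/4))^[8] (1/4 : ℝ) = (3329/4636 : ℝ) := by
  rw [Function.iterate_succ_apply', it_D_7]; norm_num [Phi, fB, fT]

lemma it_D_9 : (Phi (3/4))^[9] (1/4 : ℝ) = (7373/13316 : ℝ) := by
  rw [Function.iterate_succ_apply', it_D_8]; norm_num [Phi, fB, fT]

lemma it_D_10 : (Phi (3/4))^[10] (1/4 : ℝ) = (10233/29492 : ℝ) := by
  rw [Function.iterate_succ_apply', it_D_9]; norm_num [Phi, fB, fT]

lemma it_D_11 : (Phi (3/4))^[11] (1/4 : ℝ) = (39725/77036 : ℝ) := by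
  rw [Function.iterate_succ_apply', it_D_10]; norm_num [Phi, fB, fT]

lemma it_D_12 : (Phi (3/4))^[12] (1/4 : ℝ) = (44553/158900 : ℝ) := by
  rw [Function.iterate_succ_apply', it_D_11]; norm_num [Phi, fB, fT]

lemma it_D_13 : (Phi (3/4))^[13] (1/4 : ℝ) = (203453/457388 : ℝ) := by
  rw [Function.iterate_succ_apply', it_D_12]; norm_num [Phi, fB, fT]

lemma it_D_14 : (Phi (3/4))^[14] (1/4 : ℝ) = (660841/1015740 : ℝ) := by
  rw [Function.iterate_succ_apply', it_D_13]; norm_num [Phi, fB, fT]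

lemma it_D_15 : (Phi (3/4))^[15] (1/4 : ℝ) = (1272725/2643364 : ℝ) := by
  rw [Function.iterate_succ_apply', it_D_14]; norm_num [Phi, fB, fT]

lemma it_D_16 : (Phi (3/4))^[16] (1/4 : ℝ) = (3916089/5482556 : ℝ) := by
  rw [Function.iterate_succ_apply', it_D_15]; norm_num [Phi, fB, fT]

lemma it_D_17 : (Phi (3/4))^[17] (1/4 : ℝ) = (8615333/15664356 : ℝ) := by
  rw [Function.iterate_succ_apply', it_D_16]; norm_num [Phi, fB, fT]

lemma it_D_18 : (Phi (3/4))^[18] (1/4 : ℝ) = (11747953/34461332 : ℝ) := by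
  rw [Function.iterate_succ_apply', it_D_17]; norm_num [Phi, fB, fT]

lemma it_D_19 : (Phi (3/4))^[19] (1/4 : ℝ) = (46209285/90853516 : ℝ) := by
  rw [Function.iterate_succ_apply', it_D_18]; norm_num [Phi, fB, fT]

lemma it_D_20 : (Phi (3/4))^[20] (1/4 : ℝ) = (49339393/184837140 : ℝ) := by
  rw [Function.iterate_succ_apply', it_D_19]; norm_num [Phi, fB, fT]

lemma it_D_21 : (Phi (3/4))^[21] (1/4 : ℝ) = (234176533/541990988 : ℝ) := by
  rw [Function.iterate_succ_apply', it_D_20]; norm_num [Phi, fB, fT]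

lemma it_D_22 : (Phi (3/4))^[22] (1/4 : ℝ) = (776167521/1231257820 : ℝ) := by
  rw [Function.iterate_succ_apply', it_D_21]; norm_num [Phi, fB, fT]

lemma it_D_23 : (Phi (3/4))^[23] (1/4 : ℝ) = (1418321965/3104670084 : ℝ) := by
  rw [Function.iterate_succ_apply', it_D_22]; norm_num [Phi, fB, fT]

lemma it_D_24 : (Phi (3/4))^[24] (1/4 : ℝ) = (4522992049/6745392476 : ℝ) := by
  rw [Function.iterate_succ_apply', it_D_23]; norm_num [Phi, fB, fT]

lemma th_D_0 : Theta (3/4) 0 (1/4 : ℝ) = (3/4 : ℝ) := by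
  rw [Theta, Function.iterate_zero_apply]; norm_num [max_def]

lemma th_D_1 : Theta (3/4) 1 (1/4 : ℝ) = (7/12 : ℝ) := by
  rw [Theta, it_D_1]; norm_num [max_def]

lemma th_D_2 : Theta (3/4) 2 (1/4 : ℝ) = (17/28 : ℝ) := by
  rw [Theta, it_D_2]; norm_num [max_def]

lemma th_D_3 : Theta (3/4) 3 (1/4 : ℝ) = (39/68 : ℝ) := by
  rw [Theta, it_D_3]; norm_num [max_def]

lemma th_D_4 : Theta (3/4) 4 (1/4 : ℝ) = (97/156 : ℝ) := by
  rw [Theta, it_D_4]; norm_num [max_def]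

lemma th_D_5 : Theta (3/4) 5 (1/4 : ℝ) = (215/388 : ℝ) := by
  rw [Theta, it_D_5]; norm_num [max_def]

lemma th_D_6 : Theta (3/4) 6 (1/4 : ℝ) = (561/860 : ℝ) := by
  rw [Theta, it_D_6]; norm_num [max_def]

lemma th_D_7 : Theta (3/4) 7 (1/4 : ℝ) = (1159/2244 : ℝ) := by
  rw [Theta, it_D_7]; norm_num [max_def]

lemma th_D_8 : Theta (3/4) 8 (1/4 : ℝ) = (3329/4636 : ℝ) := by
  rw [Theta, it_D_8]; norm_num [max_def]

lemma th_D_9 : Theta (3/4) 9 (1/4 : ℝ) = (7373/13316 : ℝ) := by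
  rw [Theta, it_D_9]; norm_num [max_def]

lemma th_D_10 : Theta (3/4) 10 (1/4 : ℝ) = (19259/29492 : ℝ) := by
  rw [Theta, it_D_10]; norm_num [max_def]

lemma th_D_11 : Theta (3/4) 11 (1/4 : ℝ) = (39725/77036 : ℝ) := by
  rw [Theta, it_D_11]; norm_num [max_def]

lemma th_D_12 : Theta (3/4) 12 (1/4 : ℝ) = (114347/158900 : ℝ) := by
  rw [Theta, it_D_12]; norm_num [max_def]

lemma th_D_13 : Theta (3/4) 13 (1/4 : ℝ) = (253935/457388 : ℝ) := by
  rw [Theta, it_D_13]; norm_num [max_def]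

lemma th_D_14 : Theta (3/4) 14 (1/4 : ℝ) = (660841/1015740 : ℝ) := by
  rw [Theta, it_D_14]; norm_num [max_def]

lemma th_D_15 : Theta (3/4) 15 (1/4 : ℝ) = (1370639/2643364 : ℝ) := by
  rw [Theta, it_D_15]; norm_num [max_def]

lemma th_D_16 : Theta (3/4) 16 (1/4 : ℝ) = (3916089/5482556 : ℝ) := by
  rw [Theta, it_D_16]; norm_num [max_def]

lemma th_D_17 : Theta (3/4) 17 (1/4 : ℝ) = (8615333/15664356 : ℝ) := by
  rw [Theta, it_D_17]; norm_num [max_def]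

lemma th_D_18 : Theta (3/4) 18 (1/4 : ℝ) = (22713379/34461332 : ℝ) := by
  rw [Theta, it_D_18]; norm_num [max_def]

lemma th_D_19 : Theta (3/4) 19 (1/4 : ℝ) = (46209285/90853516 : ℝ) := by
  rw [Theta, it_D_19]; norm_num [max_def]

lemma th_D_20 : Theta (3/4) 20 (1/4 : ℝ) = (135497747/184837140 : ℝ) := by
  rw [Theta, it_D_20]; norm_num [max_def]

lemma th_D_21 : Theta (3/4) 21 (1/4 : ℝ) = (307814455/541990988 : ℝ) := by
  rw [Theta, it_D_21]; norm_num [max_def]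

lemma th_D_22 : Theta (3/4) 22 (1/4 : ℝ) = (776167521/1231257820 : ℝ) := by
  rw [Theta, it_D_22]; norm_num [max_def]

lemma th_D_23 : Theta (3/4) 23 (1/4 : ℝ) = (1686348119/3104670084 : ℝ) := by
  rw [Theta, it_D_23]; norm_num [max_def]

lemma th_D_24 : Theta (3/4) 24 (1/4 : ℝ) = (4522992049/6745392476 : ℝ) := by
  rw [Theta, it_D_24]; norm_num [max_def]

lemma pr_D_1 : ∏ k ∈ Finset.range 1, Theta (3/4) k (1/4 : ℝ) = (3/4 : ℝ) := by
  rw [Finset.prod_range_one, th_D_0]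

lemma pr_D_2 : ∏ k ∈ Finset.range 2, Theta (3/4) k (1/4 : ℝ) = (7/16 : ℝ) := by
  rw [Finset.prod_range_succ, pr_D_1, th_D_1]; norm_num

lemma pr_D_3 : ∏ k ∈ Finset.range 3, Theta (3/4) k (1/4 : ℝ) = (17/64 : ℝ) := by
  rw [Finset.prod_range_succ, pr_D_2, th_D_2]; norm_num

lemma pr_D_4 : ∏ k ∈ Finset.range 4, Theta (3/4) k (1/4 : ℝ) = (39/256 : ℝ) := by
  rw [Finset.prod_range_succ, pr_D_3, th_D_3]; norm_num

lemma pr_D_5 : ∏ k ∈ Finset.range 5, Theta (3/4) k (1/4 : ℝ) = (97/1024 : ℝ) := by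
  rw [Finset.prod_range_succ, pr_D_4, th_D_4]; norm_num

lemma pr_D_6 : ∏ k ∈ Finset.range 6, Theta (3/4) k (1/4 : ℝ) = (215/4096 : ℝ) := by
  rw [Finset.prod_range_succ, pr_D_5, th_D_5]; norm_num

lemma pr_D_7 : ∏ k ∈ Finset.range 7, Theta (3/4) k (1/4 : ℝ) = (561/16384 : ℝ) := by
  rw [Finset.prod_range_succ, pr_D_6, th_D_6]; norm_num

lemma pr_D_8 : ∏ k ∈ Finset.range 8, Theta (3/4) k (1/4 : ℝ) = (1159/65536 : ℝ) := by
  rw [Finset.prod_range_succ, pr_D_7, th_D_7]; norm_num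

lemma pr_D_9 : ∏ k ∈ Finset.range 9, Theta (3/4) k (1/4 : ℝ) = (3329/262144 : ℝ) := by
  rw [Finset.prod_range_succ, pr_D_8, th_D_8]; norm_num

lemma pr_D_10 : ∏ k ∈ Finset.range 10, Theta (3/4) k (1/4 : ℝ) = (7373/1048576 : ℝ) := by
  rw [Finset.prod_range_succ, pr_D_9, th_D_9]; norm_num

lemma pr_D_11 : ∏ k ∈ Finset.range 11, Theta (3/4) k (1/4 : ℝ) = (19259/4194304 : ℝ) := by
  rw [Finset.prod_range_succ, pr_D_10, th_D_10]; norm_num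

lemma pr_D_12 : ∏ k ∈ Finset.range 12, Theta (3/4) k (1/4 : ℝ) = (39725/16777216 : ℝ) := by
  rw [Finset.prod_range_succ, pr_D_11, th_D_11]; norm_num

lemma pr_D_13 : ∏ k ∈ Finset.range 13, Theta (3/4) k (1/4 : ℝ) = (114347/67108864 : ℝ) := by
  rw [Finset.prod_range_succ, pr_D_12, th_D_12]; norm_num

lemma pr_D_14 : ∏ k ∈ Finset.range 14, Theta (3/4) k (1/4 : ℝ) = (253935/268435456 : ℝ) := by
  rw [Finset.prod_range_succ, pr_D_13, th_D_13]; norm_num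

lemma pr_D_15 : ∏ k ∈ Finset.range 15, Theta (3/4) k (1/4 : ℝ) = (660841/1073741824 : ℝ) := by
  rw [Finset.prod_range_succ, pr_D_14, th_D_14]; norm_num

lemma pr_D_16 : ∏ k ∈ Finset.range 16, Theta (3/4) k (1/4 : ℝ) = (1370639/4294967296 : ℝ) := by
  rw [Finset.prod_range_succ, pr_D_15, th_D_15]; norm_num

lemma pr_D_17 : ∏ k ∈ Finset.range 17, Theta (3/4) k (1/4 : ℝ) = (3916089/17179869184 : ℝ) := by
  rw [Finset.prod_range_succ, pr_D_16, th_D_16]; norm_num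

lemma pr_D_18 : ∏ k ∈ Finset.range 18, Theta (3/4) k (1/4 : ℝ) = (8615333/68719476736 : ℝ) := by
  rw [Finset.prod_range_succ, pr_D_17, th_D_17]; norm_num

lemma pr_D_19 : ∏ k ∈ Finset.range 19, Theta (3/4) k (1/4 : ℝ) = (22713379/274877906944 : ℝ) := by
  rw [Finset.prod_range_succ, pr_D_18, th_D_18]; norm_num

lemma pr_D_20 : ∏ k ∈ Finset.range 20, Theta (3/4) k (1/4 : ℝ) = (46209285/1099511627776 : ℝ) := by
  rw [Finset.prod_range_succ, pr_D_19, th_D_19]; norm_num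

lemma pr_D_21 : ∏ k ∈ Finset.range 21, Theta (3/4) k (1/4 : ℝ) = (135497747/4398046511104 : ℝ) := by
  rw [Finset.prod_range_succ, pr_D_20, th_D_20]; norm_num

lemma pr_D_22 : ∏ k ∈ Finset.range 22, Theta (3/4) k (1/4 : ℝ) = (307814455/17592186044416 : ℝ) := by
  rw [Finset.prod_range_succ, pr_D_21, th_D_21]; norm_num

lemma pr_D_23 : ∏ k ∈ Finset.range 23, Theta (3/4) k (1/4 : ℝ) = (776167521/70368744177664 : ℝ) := by
  rw [Finset.prod_range_succ, pr_D_22, th_D_22]; norm_num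

lemma pr_D_24 : ∏ k ∈ Finset.range 24, Theta (3/4) k (1/4 : ℝ) = (1686348119/281474976710656 : ℝ) := by
  rw [Finset.prod_range_succ, pr_D_23, th_D_23]; norm_num

lemma pr_D_25 : ∏ k ∈ Finset.range 25, Theta (3/4) k (1/4 : ℝ) = (4522992049/1125899906842624 : ℝ) := by
  rw [Finset.prod_range_succ, pr_D_24, th_D_24]; norm_num

lemma su_D : ∑ n ∈ Finset.range 25, ∏ k ∈ Finset.range n, Theta (3/4) k (1/4 : ℝ) = (798102323088395/281474976710656 : ℝ) := by
  simp only [Finset.sum_range_succ, Finset.sum_range_zero, Finset.prod_range_zero, pr_D_1, pr_D_2, pr_D_3, pr_D_4, pr_D_5, pr_D_6, pr_D_7, pr_D_8, pr_D_9, pr_D_10, pr_D_11, pr_D_12, pr_D_13, pr_D_14, pr_D_15, pr_D_16, pr_D_17, pr_D_18, pr_D_19, pr_D_20, pr_D_21, pr_D_22, pr_D_23, pr_D_24]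
  norm_num

/-- At `p = 3/4`, with `θ̃ = 1085/2244` and `ε = 1/100`, the key inequality showing
that `σ*` is not optimal for Player 1 at `p = 3/4`:
`(1-θ̃)(w(Φ(θ̃)) - w(θ̃_ε)) - θ̃(w(1-p_ε) - (1-ε)w(1-p)) > 10⁻⁵`. -/
theorem sigma_star_not_optimal_at_three_quarters :
    let p : ℝ := 3/4
    let θt : ℝ := 1085/2244
    let ε : ℝ := 1/100
    let θε : ℝ := (p*(1-ε)*θt + (1-p)*(1-(2-ε)*θt))/(1-θt)
    let pε : ℝ := p*(1-ε) + (1-p)*ε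
    (1-θt)*(w p (Phi p θt) - w p θε) - θt*(w p (1-pε) - (1-ε)*w p (1-p))
      > 1/100000 := by
  intro p θt ε θε pε
  have hphi : Phi (3/4) (1085/2244 : ℝ) = (3329/4636 : ℝ) := by
    norm_num [Phi, fB, fT]
  have hA := w_bounds (θ := (3329/4636:ℝ)) (by norm_num) (by norm_num) (N := 25) (by norm_num)
  have hB := w_bounds (θ := (33073/46360:ℝ)) (by norm_num) (by norm_num) (N := 25) (by norm_num)
  have hC := w_bounds (θ := (51/200:ℝ)) (by norm_num) (by norm_num) (N := 25) (by norm_num)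
  have hD := w_bounds (θ := (1/4:ℝ)) (by norm_num) (by norm_num) (N := 25) (by norm_num)
  rw [su_A, pr_A_25] at hA
  rw [su_B, pr_B_25] at hB
  rw [su_C, pr_C_25] at hC
  rw [su_D, pr_D_25] at hD
  show (1-θt)*(w (3/4) (Phi (3/4) θt) - w (3/4) θε) - θt*(w (3/4) (1-pε) - (1-ε)*w (3/4) (1-p)) > 1/100000
  have h1 : θε = (33073/46360:ℝ) := by norm_num [θε, θt, ε, p]
  have h2 : 1 - pε = (51/200:ℝ) := by norm_num [pε, ε, p]
  have h3 : 1 - p = (1/4:ℝ) := by norm_num [p]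
  have h4 : θt = (1085/2244:ℝ) := rfl
  rw [h1, h2, h3, h4, hphi]
  have e1 := hA.1
  have e2 := hB.2
  have e3 := hC.2
  have e4 := hD.1
  nlinarith [e1, e2, e3, e4]
end
end
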